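/- arXiv:1404.7289 — 8 statements merged into one kernel-verified Lean document; each statement's English description precedes it below -/
import Mathlib

section
/- Let r ≥ 2 be an integer and α ∈ ℂ. Then: (i) for every integer m with 1 ≤ m ≤ r−1, Σ_{l ∈ H_r} (q^{(α+l)m} − q^{−(α+l)m}) = 0; and (ii) Σ_{l ∈ H_r} (q^{(α+l)r} − q^{−(α+l)r}) = (−1)^{r−1} · r · (q^{rα} − q^{−rα}). (These are the sum evaluations underlying the surgery computations with Kirby colors, in particular the computation showing Z(S²×S¹, P_k×S¹, ω_α) = δ_{k,0} in the lemma on nilpotent endomorphisms.) -/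
/-- `q^x = exp(π i x / r)`. -/
noncomputable def qc (r : ℕ) (x : ℂ) : ℂ := Complex.exp (Real.pi * Complex.I * x / r)

/-- `⦃x⦄ = q^x - q^{-x}`. -/
noncomputable def br (r : ℕ) (x : ℂ) : ℂ := qc r x - qc r (-x)

/-- `H_r = {1-r, 3-r, …, r-1}`, the `r` integers `2j - (r-1)` for `j = 0, …, r-1`. -/
def Hr (r : ℕ) : Finset ℤ := (Finset.range r).image (fun j : ℕ => 2 * (j : ℤ) - ((r : ℤ) - 1))

lemma sum_Hr (r : ℕ) (f : ℤ → ℂ) :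
    ∑ l ∈ Hr r, f l = ∑ j ∈ Finset.range r, f (2 * (j : ℤ) - ((r : ℤ) - 1)) := by
  rw [Hr, Finset.sum_image]
  intro a _ b _ h
  have h' : 2 * (a : ℤ) - ((r : ℤ) - 1) = 2 * (b : ℤ) - ((r : ℤ) - 1) := h
  omega

lemma main_vanish (r : ℕ) (hr : 2 ≤ r) (β : ℂ) (m : ℤ) (hm : ¬ (r : ℤ) ∣ m) :
    ∑ j ∈ Finset.range r, qc r ((β + ((2 * (j : ℤ) - ((r : ℤ) - 1)) : ℤ)) * (m : ℂ)) = 0 := by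
  have hr0 : (r : ℂ) ≠ 0 := Nat.cast_ne_zero.mpr (by omega)
  set t : ℂ := 2 * Real.pi * Complex.I * m / r with ht
  set a : ℂ := Real.pi * Complex.I * (β - ((r : ℂ) - 1)) * m / r with ha
  have hterm : ∀ j ∈ Finset.range r,
      qc r ((β + ((2 * (j : ℤ) - ((r : ℤ) - 1)) : ℤ)) * (m : ℂ))
        = Complex.exp a * (Complex.exp t) ^ j := by
    intro j _
    rw [← Complex.exp_nat_mul, ← Complex.exp_add, qc]
    congr 1
    push_cast
    field_simp [ha, ht]
    rw [ha, ht]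
    field_simp
    ring
  rw [Finset.sum_congr rfl hterm, ← Finset.mul_sum]
  have hx1 : Complex.exp t ≠ 1 := by
    intro hx
    rw [Complex.exp_eq_one_iff] at hx
    obtain ⟨n, hn⟩ := hx
    apply hm
    have hπ : (Real.pi : ℂ) ≠ 0 := by exact_mod_cast Real.pi_ne_zero
    have hI : Complex.I ≠ 0 := Complex.I_ne_zero
    rw [ht] at hn
    field_simp at hn
    have h2πI : (2 * (Real.pi : ℂ) * Complex.I) ≠ 0 :=
      mul_ne_zero (mul_ne_zero two_ne_zero hπ) hI
    have hn' : (2 * (Real.pi : ℂ) * Complex.I) * m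
        = (2 * (Real.pi : ℂ) * Complex.I) * (n * r) := by linear_combination (2 * (Real.pi : ℂ) * Complex.I) * hn
    have hmc : (m : ℂ) = n * r := mul_left_cancel₀ h2πI hn'
    have hmz : m = n * r := by exact_mod_cast hmc
    exact ⟨n, by rw [hmz, mul_comm]⟩
  have hxr : Complex.exp t ^ r = 1 := by
    rw [← Complex.exp_nat_mul]
    have : (r : ℂ) * t = m * (2 * Real.pi * Complex.I) := by
      rw [ht]; field_simp
    rw [this]
    exact_mod_cast Complex.exp_int_mul_two_pi_mul_I m
  rw [geom_sum_eq hx1, hxr]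
  simp

lemma neg_one_zpow_eq (r : ℕ) (hr : 2 ≤ r) (j : ℕ) :
    (-1 : ℂ) ^ (2 * (j : ℤ) - ((r : ℤ) - 1)) = (-1 : ℂ) ^ (r - 1) := by
  have hr1 : ((r : ℤ) - 1) = ((r - 1 : ℕ) : ℤ) := by omega
  rw [zpow_sub₀ (by norm_num : (-1 : ℂ) ≠ 0), hr1, zpow_natCast]
  have h2j : (-1 : ℂ) ^ (2 * (j : ℤ)) = 1 := by
    rw [show 2 * (j : ℤ) = ((2 * j : ℕ) : ℤ) by push_cast; ring, zpow_natCast, pow_mul]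
    norm_num
  rw [h2j, one_div, ← inv_pow]
  norm_num

lemma exp_pi_int (k : ℤ) :
    Complex.exp ((Real.pi : ℂ) * Complex.I * k) = (-1 : ℂ) ^ k := by
  rw [show ((Real.pi : ℂ) * Complex.I * k : ℂ) = k * ((Real.pi : ℂ) * Complex.I) by ring,
    Complex.exp_int_mul, Complex.exp_pi_mul_I]

/-- (i) for `1 ≤ m ≤ r-1`, `Σ_{l ∈ H_r} (q^{(α+l)m} − q^{−(α+l)m}) = 0`;
(ii) `Σ_{l ∈ H_r} (q^{(α+l)r} − q^{−(α+l)r}) = (−1)^{r−1} · r · (q^{rα} − q^{−rα})`. -/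
theorem statement2 (r : ℕ) (hr : 2 ≤ r) (α : ℂ) :
    (∀ m : ℕ, 1 ≤ m → m ≤ r - 1 →
      ∑ l ∈ Hr r, br r ((α + (l : ℂ)) * (m : ℂ)) = 0) ∧
    ∑ l ∈ Hr r, br r ((α + (l : ℂ)) * (r : ℂ))
      = (-1 : ℂ) ^ (r - 1) * (r : ℂ) * br r ((r : ℂ) * α) := by
  have hr0 : (r : ℂ) ≠ 0 := Nat.cast_ne_zero.mpr (by omega)
  constructor
  · intro m hm1 hm2
    rw [sum_Hr]
    simp only [br, Finset.sum_sub_distrib]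
    have hnd : ¬ (r : ℤ) ∣ (m : ℤ) := by
      intro hd
      have hm0 : (0 : ℤ) < (m : ℤ) := by exact_mod_cast hm1
      have := Int.le_of_dvd hm0 hd
      omega
    have h1 := main_vanish r hr α (m : ℤ) hnd
    have h2 := main_vanish r hr α (-(m : ℤ)) (by rwa [Int.dvd_neg])
    have e1 : ∑ j ∈ Finset.range r,
        qc r ((α + ((2 * (j : ℤ) - ((r : ℤ) - 1) : ℤ) : ℂ)) * (m : ℂ)) = 0 := by
      rw [← h1]
      refine Finset.sum_congr rfl fun j _ => ?_
      congr 1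
      all_goals (push_cast; ring)
    have e2 : ∑ j ∈ Finset.range r,
        qc r (-((α + ((2 * (j : ℤ) - ((r : ℤ) - 1) : ℤ) : ℂ)) * (m : ℂ))) = 0 := by
      rw [← h2]
      refine Finset.sum_congr rfl fun j _ => ?_
      congr 1
      all_goals (push_cast; ring)
    rw [e1, e2, sub_zero]
  · rw [sum_Hr]
    have key : ∀ j ∈ Finset.range r,
        br r ((α + ((2 * (j : ℤ) - ((r : ℤ) - 1) : ℤ) : ℂ)) * (r : ℂ))
          = (-1 : ℂ) ^ (r - 1) * br r ((r : ℂ) * α) := by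
      intro j _
      set l : ℤ := 2 * (j : ℤ) - ((r : ℤ) - 1) with hl
      have q1 : qc r ((α + (l : ℂ)) * (r : ℂ)) = (-1 : ℂ) ^ (r - 1) * qc r ((r : ℂ) * α) := by
        rw [qc, qc]
        have harg : (Real.pi : ℂ) * Complex.I * ((α + (l : ℂ)) * (r : ℂ)) / r
            = (Real.pi : ℂ) * Complex.I * ((r : ℂ) * α) / r + (Real.pi : ℂ) * Complex.I * l := by
          field_simp
        rw [harg, Complex.exp_add, exp_pi_int, hl, neg_one_zpow_eq r hr j, mul_comm]
      have q2 : qc r (-((α + (l : ℂ)) * (r : ℂ)))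
          = (-1 : ℂ) ^ (r - 1) * qc r (-((r : ℂ) * α)) := by
        rw [qc, qc]
        have harg : (Real.pi : ℂ) * Complex.I * (-((α + (l : ℂ)) * (r : ℂ))) / r
            = (Real.pi : ℂ) * Complex.I * (-((r : ℂ) * α)) / r
              + (Real.pi : ℂ) * Complex.I * (-l : ℤ) := by
          push_cast
          field_simp
          ring
        rw [harg, Complex.exp_add, exp_pi_int]
        have : (-1 : ℂ) ^ (-l) = (-1 : ℂ) ^ (r - 1) := by
          rw [zpow_neg, hl, neg_one_zpow_eq r hr j, ← inv_pow]
          norm_num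
        rw [this, mul_comm]
      rw [br, br, q1, q2, mul_sub]
    rw [Finset.sum_congr rfl key, Finset.sum_const, Finset.card_range, nsmul_eq_mul]
    ring
end

section
/- Let r ≥ 3 be an odd integer and g ≥ 2 an integer. Then the function β ↦ (r^{g}/r) · Σ_{k ∈ H_r} (⦃rβ⦄/⦃β+k⦄)^{2g−2} (a function of β ∈ ℂ) tends to r^{3g−3} as β tends to 0 within ℂ∖{0}. (This is the evaluation of the paper's Verlinde formula giving dim 𝕍(Σ) = r^{3g−3} for a genus-g surface with no marked points and integral cohomology class, when r is odd.) -/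
open Complex Filter

lemma br_eq (r : ℕ) (x : ℂ) :
    br r x = 2 * Complex.I * Complex.sin ((Real.pi : ℂ) * x / r) := by
  have h1 : (Real.pi:ℂ) * Complex.I * x / r = ((Real.pi:ℂ) * x / r) * Complex.I := by ring
  have h2 : (Real.pi:ℂ) * Complex.I * (-x) / r = (-((Real.pi:ℂ) * x / r)) * Complex.I := by ring
  rw [br, qc, qc, h1, h2, Complex.exp_mul_I, Complex.exp_mul_I, Complex.sin_neg, Complex.cos_neg]
  ring

lemma tendsto_sin_div : Tendsto (fun z : ℂ => Complex.sin z / z) (nhdsWithin 0 {(0:ℂ)}ᶜ) (nhds 1) := by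
  have h := Complex.hasDerivAt_sin 0
  rw [Complex.cos_zero] at h
  have h2 := hasDerivAt_iff_tendsto_slope.mp h
  simp only [slope_fun_def, Complex.sin_zero, sub_zero] at h2
  exact h2.congr (fun z => by simp [div_eq_inv_mul])

lemma tendsto_const_mul_punctured (c : ℂ) (hc : c ≠ 0) :
    Tendsto (fun β : ℂ => c * β) (nhdsWithin 0 {(0:ℂ)}ᶜ) (nhdsWithin 0 {(0:ℂ)}ᶜ) := by
  rw [tendsto_nhdsWithin_iff]
  constructor
  · have : Continuous (fun β : ℂ => c * β) := continuous_const.mul continuous_id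
    simpa using (this.tendsto 0).mono_left nhdsWithin_le_nhds
  · filter_upwards [self_mem_nhdsWithin] with x hx
    simp only [Set.mem_compl_iff, Set.mem_singleton_iff] at hx ⊢
    exact mul_ne_zero hc hx

lemma key (r : ℕ) (hr : 0 < r) :
    Tendsto (fun β : ℂ => Complex.sin ((Real.pi:ℂ) * β) / Complex.sin ((Real.pi:ℂ) * β / r))
      (nhdsWithin 0 {(0:ℂ)}ᶜ) (nhds (r : ℂ)) := by
  have hπ : (Real.pi : ℂ) ≠ 0 := Complex.ofReal_ne_zero.mpr Real.pi_ne_zero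
  have hrC : (r : ℂ) ≠ 0 := Nat.cast_ne_zero.mpr hr.ne'
  have A : Tendsto (fun β : ℂ => Complex.sin ((Real.pi:ℂ) * β) / ((Real.pi:ℂ) * β))
      (nhdsWithin 0 {(0:ℂ)}ᶜ) (nhds 1) :=
    tendsto_sin_div.comp (tendsto_const_mul_punctured _ hπ)
  have B : Tendsto (fun β : ℂ => Complex.sin ((Real.pi:ℂ) * β / r) / ((Real.pi:ℂ) * β / r))
      (nhdsWithin 0 {(0:ℂ)}ᶜ) (nhds 1) := by
    have := tendsto_sin_div.comp (tendsto_const_mul_punctured ((Real.pi:ℂ)/r) (div_ne_zero hπ hrC))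
    refine this.congr fun β => ?_
    simp only [Function.comp_apply]
    ring_nf
  have C : Tendsto (fun β : ℂ => (r:ℂ) * (Complex.sin ((Real.pi:ℂ) * β) / ((Real.pi:ℂ) * β)) /
      (Complex.sin ((Real.pi:ℂ) * β / r) / ((Real.pi:ℂ) * β / r)))
      (nhdsWithin 0 {(0:ℂ)}ᶜ) (nhds ((r:ℂ) * 1 / 1)) :=
    (tendsto_const_nhds.mul A).div B one_ne_zero
  rw [mul_one, div_one] at C
  refine C.congr' ?_
  filter_upwards [self_mem_nhdsWithin] with β hβ
  simp only [Set.mem_compl_iff, Set.mem_singleton_iff] at hβ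
  rcases eq_or_ne (Complex.sin ((Real.pi:ℂ) * β / r)) 0 with hs | hs
  · simp [hs]
  · field_simp

lemma br_cont (r : ℕ) : Continuous (br r) := by
  unfold br qc
  fun_prop

lemma br_zero (r : ℕ) : br r 0 = 0 := by simp [br, qc]

lemma br_ne_zero (r : ℕ) (hr : 0 < r) (k : ℤ) (hk : k ≠ 0) (hk2 : |k| < (r:ℤ)) :
    br r (k : ℂ) ≠ 0 := by
  have hπ : (Real.pi : ℂ) ≠ 0 := Complex.ofReal_ne_zero.mpr Real.pi_ne_zero
  have hrC : (r : ℂ) ≠ 0 := Nat.cast_ne_zero.mpr hr.ne'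
  rw [br_eq]
  refine mul_ne_zero (by norm_num [Complex.I_ne_zero]) ?_
  intro hs
  rw [Complex.sin_eq_zero_iff] at hs
  obtain ⟨n, hn⟩ := hs
  have hkn : (k : ℂ) = (n : ℂ) * r := by
    have h2 : (Real.pi:ℂ) * k = (n:ℂ) * Real.pi * r := by
      field_simp at hn
      linear_combination (Real.pi:ℂ) * hn
    apply mul_left_cancel₀ hπ
    linear_combination h2
  have hkn' : k = n * r := by exact_mod_cast hkn
  have hn0 : n ≠ 0 := by rintro rfl; simp at hkn'; omega
  have : (r:ℤ) ≤ |k| := by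
    rw [hkn', abs_mul]
    calc (r:ℤ) = 1 * (r:ℤ) := (one_mul _).symm
    _ ≤ |n| * |(r:ℤ)| := by
        apply mul_le_mul (Int.one_le_abs hn0) (le_abs_self _) (by positivity) (abs_nonneg _)
  omega

/-- for odd `r ≥ 3` and `g ≥ 2`, the Verlinde expression
`(r^g/r) · Σ_{k ∈ H_r} (⦃rβ⦄/⦃β+k⦄)^{2g−2}` tends to `r^{3g−3}` as `β → 0`, `β ≠ 0`. -/
theorem statement3 (r g : ℕ) (hr : 3 ≤ r) (hodd : Odd r) (hg : 2 ≤ g) :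
    Filter.Tendsto
      (fun β : ℂ => ((r : ℂ) ^ g / (r : ℂ)) *
        ∑ k ∈ Hr r, (br r ((r : ℂ) * β) / br r (β + (k : ℂ))) ^ (2 * g - 2))
      (nhdsWithin 0 {(0 : ℂ)}ᶜ) (nhds ((r : ℂ) ^ (3 * g - 3))) := by
  have hr0 : 0 < r := by omega
  have hrC : (r : ℂ) ≠ 0 := Nat.cast_ne_zero.mpr hr0.ne'
  have hn : 2 * g - 2 ≠ 0 := by omega
  set L : ℤ → ℂ := fun k => if k = 0 then (r:ℂ) ^ (2 * g - 2) else 0 with hL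
  have hterm : ∀ k ∈ Hr r, Tendsto (fun β : ℂ => (br r ((r : ℂ) * β) / br r (β + (k : ℂ))) ^ (2 * g - 2))
      (nhdsWithin 0 {(0:ℂ)}ᶜ) (nhds (L k)) := by
    intro k hk
    simp only [Hr, Finset.mem_image, Finset.mem_range] at hk
    obtain ⟨j, hj, rfl⟩ := hk
    set k : ℤ := 2 * (j:ℤ) - ((r:ℤ) - 1) with hkdef
    have hkb : |k| < (r:ℤ) := by rw [hkdef, abs_lt]; omega
    rcases eq_or_ne k 0 with hk0 | hk0
    · -- k = 0 : ratio → r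
      rw [hL]
      simp only [hk0, if_pos rfl]
      refine Tendsto.pow ?_ _
      have := key r hr0
      refine this.congr fun β => ?_
      push_cast
      rw [add_zero, br_eq, br_eq]
      have h1 : (Real.pi:ℂ) * ((r:ℂ) * β) / r = (Real.pi:ℂ) * β := by field_simp
      rw [h1, mul_div_mul_left _ _ (by norm_num [Complex.I_ne_zero] : (2:ℂ) * Complex.I ≠ 0)]
    · -- k ≠ 0 : ratio → 0
      rw [hL]
      simp only [if_neg hk0]
      have hnum : Tendsto (fun β : ℂ => br r ((r:ℂ) * β)) (nhdsWithin 0 {(0:ℂ)}ᶜ) (nhds 0) := by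
        have : Continuous (fun β : ℂ => br r ((r:ℂ) * β)) :=
          (br_cont r).comp (continuous_const.mul continuous_id)
        have h0 : Tendsto (fun β : ℂ => br r ((r:ℂ) * β)) (nhdsWithin 0 {(0:ℂ)}ᶜ) (nhds (br r ((r:ℂ) * 0))) :=
          (this.tendsto 0).mono_left nhdsWithin_le_nhds
        simpa [br_zero] using h0
      have hden : Tendsto (fun β : ℂ => br r (β + (k:ℂ))) (nhdsWithin 0 {(0:ℂ)}ᶜ) (nhds (br r (k:ℂ))) := by
        have : Continuous (fun β : ℂ => br r (β + (k:ℂ))) :=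
          (br_cont r).comp (continuous_id.add continuous_const)
        have h0 : Tendsto (fun β : ℂ => br r (β + (k:ℂ))) (nhdsWithin 0 {(0:ℂ)}ᶜ) (nhds (br r (0 + (k:ℂ)))) :=
          (this.tendsto 0).mono_left nhdsWithin_le_nhds
        simpa using h0
      have hq := hnum.div hden (br_ne_zero r hr0 k hk0 hkb)
      rw [zero_div] at hq
      have := hq.pow (2 * g - 2)
      simpa [zero_pow hn] using this
  have hsum := tendsto_finset_sum (Hr r) hterm
  have hsumval : ∑ k ∈ Hr r, L k = (r:ℂ) ^ (2 * g - 2) := by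
    rw [hL]
    rw [Finset.sum_ite_eq' (Hr r) 0 (fun _ => (r:ℂ) ^ (2 * g - 2))]
    have h0 : (0:ℤ) ∈ Hr r := by
      simp only [Hr, Finset.mem_image, Finset.mem_range]
      obtain ⟨m, hm⟩ := hodd
      exact ⟨m, by omega, by push_cast [hm]; ring⟩
    rw [if_pos h0]
  rw [hsumval] at hsum
  have hfin := hsum.const_mul ((r:ℂ) ^ g / (r:ℂ))
  have : (r:ℂ) ^ g / (r:ℂ) * (r:ℂ) ^ (2 * g - 2) = (r:ℂ) ^ (3 * g - 3) := by
    rw [div_mul_eq_mul_div, ← pow_add,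
      show g + (2 * g - 2) = (3 * g - 3) + 1 by omega, pow_succ,
      mul_div_assoc, div_self hrC, mul_one]
  rwa [this] at hfin
end

section
/- Let r ≥ 2 be an even integer and g ≥ 2 an integer. Then the function β ↦ ((r/2)^{g}/r) · Σ_{k ∈ H_r} (⦃rβ⦄/⦃β+k⦄)^{2g−2} (a function of β ∈ ℂ) tends to r^{3g−3}/2^{g−1} as β tends to 1 within ℂ∖{1}. (This is the evaluation of the paper's Verlinde formula giving dim 𝕍(Σ) = r^{3g−3}/2^{g−1} for a genus-g surface when r is even and β goes to an odd integer.) -/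
open Complex Filter Finset

private lemma hpiI : (Real.pi : ℂ) * Complex.I ≠ 0 :=
  mul_ne_zero (by exact_mod_cast Real.pi_ne_zero) Complex.I_ne_zero

/-- for even `r ≥ 2` and `g ≥ 2`, the Verlinde expression
`((r/2)^g/r) · Σ_{k ∈ H_r} (⦃rβ⦄/⦃β+k⦄)^{2g−2}` tends to `r^{3g−3}/2^{g−1}` as
`β → 1`, `β ≠ 1`. -/
theorem statement4 (r g : ℕ) (hr : 2 ≤ r) (heven : Even r) (hg : 2 ≤ g) :
    Filter.Tendsto
      (fun β : ℂ => (((r : ℂ) / 2) ^ g / (r : ℂ)) *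
        ∑ k ∈ Hr r, (br r ((r : ℂ) * β) / br r (β + (k : ℂ))) ^ (2 * g - 2))
      (nhdsWithin 1 {(1 : ℂ)}ᶜ) (nhds ((r : ℂ) ^ (3 * g - 3) / 2 ^ (g - 1))) := by
  have hr0 : (r : ℂ) ≠ 0 := Nat.cast_ne_zero.2 (by omega)
  have hpi : (Real.pi : ℂ) * Complex.I ≠ 0 := hpiI
  set c : ℂ := (Real.pi : ℂ) * Complex.I / r with hc
  have hc0 : c ≠ 0 := div_ne_zero hpiI hr0
  -- rewriting br through exponentials
  have hbrr : ∀ β : ℂ, br r ((r : ℂ) * β) =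
      Complex.exp ((Real.pi : ℂ) * Complex.I * β) -
        Complex.exp (-((Real.pi : ℂ) * Complex.I * β)) := by
    intro β
    unfold br qc
    congr 1 <;> congr 1 <;> field_simp <;> ring
  have hbrk : ∀ x : ℂ, br r x = Complex.exp (c * x) - Complex.exp (-(c * x)) := by
    intro x
    unfold br qc
    rw [hc]
    congr 1 <;> congr 1 <;> field_simp
  -- the derivative of the numerator
  have hf1 : br r ((r : ℂ) * 1) = 0 := by
    rw [hbrr 1, mul_one, Complex.exp_pi_mul_I, Complex.exp_neg, Complex.exp_pi_mul_I]
    norm_num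
  have hderf : HasDerivAt (fun β : ℂ => br r ((r : ℂ) * β))
      (-(2 * (Real.pi : ℂ) * Complex.I)) 1 := by
    have h1 : HasDerivAt (fun β : ℂ => (Real.pi : ℂ) * Complex.I * β)
        ((Real.pi : ℂ) * Complex.I) 1 := by
      simpa using (hasDerivAt_id (1 : ℂ)).const_mul ((Real.pi : ℂ) * Complex.I)
    have h2 := (h1.cexp).sub ((h1.neg).cexp)
    have h3 : Complex.exp ((Real.pi : ℂ) * Complex.I * 1) * ((Real.pi : ℂ) * Complex.I) -
        Complex.exp (-((Real.pi : ℂ) * Complex.I * 1)) * (-((Real.pi : ℂ) * Complex.I)) =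
        -(2 * (Real.pi : ℂ) * Complex.I) := by
      rw [mul_one, Complex.exp_pi_mul_I, Complex.exp_neg, Complex.exp_pi_mul_I]
      ring
    simp only [Pi.neg_apply] at h2
    rw [h3] at h2
    exact h2.congr_of_eventuallyEq (Filter.Eventually.of_forall fun β => hbrr β)
  -- the derivative of the denominators
  have hderg : ∀ k : ℤ, HasDerivAt (fun β : ℂ => br r (β + (k : ℂ)))
      (c * (Complex.exp (c * (1 + (k : ℂ))) + Complex.exp (-(c * (1 + (k : ℂ)))))) 1 := by
    intro k
    have h1 : HasDerivAt (fun β : ℂ => c * (β + (k : ℂ))) c 1 := by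
      simpa using ((hasDerivAt_id (1 : ℂ)).add_const ((k : ℤ) : ℂ)).const_mul c
    have h2 := (h1.cexp).sub ((h1.neg).cexp)
    have h3 : Complex.exp (c * (1 + (k : ℂ))) * c -
        Complex.exp (-(c * (1 + (k : ℂ)))) * (-c) =
        c * (Complex.exp (c * (1 + (k : ℂ))) + Complex.exp (-(c * (1 + (k : ℂ))))) := by ring
    simp only [Pi.neg_apply] at h2
    rw [h3] at h2
    exact h2.congr_of_eventuallyEq (Filter.Eventually.of_forall fun β => hbrk (β + k))
  -- singular-term limit machinery
  have key : ∀ (k : ℤ) (d : ℂ), d ≠ 0 → br r (1 + (k : ℂ)) = 0 →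
      HasDerivAt (fun β : ℂ => br r (β + (k : ℂ))) d 1 →
      Tendsto (fun β : ℂ => (br r ((r : ℂ) * β) / br r (β + (k : ℂ))) ^ (2 * g - 2))
        (nhdsWithin 1 {(1 : ℂ)}ᶜ)
        (nhds (((-(2 * (Real.pi : ℂ) * Complex.I)) / d) ^ (2 * g - 2))) := by
    intro k d hd hk0 hd1
    have hs1 := hasDerivAt_iff_tendsto_slope.1 hderf
    have hs2 := hasDerivAt_iff_tendsto_slope.1 hd1
    have hdiv := hs1.div hs2 hd
    have hev : ∀ᶠ β in nhdsWithin (1 : ℂ) {(1 : ℂ)}ᶜ,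
        slope (fun β : ℂ => br r ((r : ℂ) * β)) 1 β /
          slope (fun β : ℂ => br r (β + (k : ℂ))) 1 β =
        br r ((r : ℂ) * β) / br r (β + (k : ℂ)) := by
      filter_upwards [eventually_mem_nhdsWithin] with β hβ
      have hβ1 : β - 1 ≠ 0 := sub_ne_zero.2 (by simpa using hβ)
      rw [slope_def_field, slope_def_field, hf1, hk0, sub_zero, sub_zero,
        div_div_div_comm, div_self hβ1, div_one]
    exact (hdiv.congr' hev).pow (2 * g - 2)
  -- even exponent
  have hevenexp : Even (2 * g - 2) := ⟨g - 1, by omega⟩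
  -- the termwise limits
  set L : ℤ → ℂ := fun k => if k = -1 ∨ k = (r : ℤ) - 1 then (r : ℂ) ^ (2 * g - 2) else 0
    with hL
  have hterm : ∀ k ∈ Hr r,
      Tendsto (fun β : ℂ => (br r ((r : ℂ) * β) / br r (β + (k : ℂ))) ^ (2 * g - 2))
        (nhdsWithin 1 {(1 : ℂ)}ᶜ) (nhds (L k)) := by
    intro k hk
    by_cases hk1 : k = -1
    · subst hk1
      have hk0 : br r (1 + ((-1 : ℤ) : ℂ)) = 0 := by
        rw [hbrk]; norm_num
      have hd : c * (Complex.exp (c * (1 + ((-1 : ℤ) : ℂ))) +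
          Complex.exp (-(c * (1 + ((-1 : ℤ) : ℂ))))) = 2 * c := by
        norm_num
        ring
      have h := key (-1) _ (by rw [hd]; exact mul_ne_zero two_ne_zero hc0) hk0 (hderg (-1))
      rw [hd] at h
      have hval : (-(2 * (Real.pi : ℂ) * Complex.I)) / (2 * c) = -(r : ℂ) := by
        simp only [hc]
        rw [div_eq_iff (mul_ne_zero two_ne_zero (div_ne_zero hpi hr0))]
        field_simp
      rw [hval, hevenexp.neg_pow] at h
      simpa [hL] using h
    · by_cases hk2 : k = (r : ℤ) - 1
      · subst hk2
        have hcast : (((r : ℤ) - 1 : ℤ) : ℂ) = (r : ℂ) - 1 := by push_cast; ring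
        have harg : c * (1 + (((r : ℤ) - 1 : ℤ) : ℂ)) = (Real.pi : ℂ) * Complex.I := by
          rw [hcast, hc]; field_simp; ring
        have hk0 : br r (1 + (((r : ℤ) - 1 : ℤ) : ℂ)) = 0 := by
          rw [hbrk, harg, Complex.exp_pi_mul_I, Complex.exp_neg, Complex.exp_pi_mul_I]
          norm_num
        have hd : c * (Complex.exp (c * (1 + (((r : ℤ) - 1 : ℤ) : ℂ))) +
            Complex.exp (-(c * (1 + (((r : ℤ) - 1 : ℤ) : ℂ))))) = -(2 * c) := by
          rw [harg, Complex.exp_pi_mul_I, Complex.exp_neg, Complex.exp_pi_mul_I]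
          ring
        have h := key ((r : ℤ) - 1) _
          (by rw [hd]; exact neg_ne_zero.2 (mul_ne_zero two_ne_zero hc0)) hk0
          (hderg ((r : ℤ) - 1))
        rw [hd] at h
        have hval : (-(2 * (Real.pi : ℂ) * Complex.I)) / (-(2 * c)) = (r : ℂ) := by
          simp only [hc]
          rw [div_eq_iff (neg_ne_zero.2 (mul_ne_zero two_ne_zero (div_ne_zero hpi hr0)))]
          field_simp
        rw [hval] at h
        simpa [hL] using h
      · -- nonsingular terms
        have hkne : br r (1 + (k : ℂ)) ≠ 0 := by
          intro h0
          rw [hbrk, sub_eq_zero, Complex.exp_eq_exp_iff_exists_int] at h0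
          obtain ⟨n, hn⟩ := h0
          simp only [hc] at hn
          have hn3 : (1 + (k : ℂ)) = ((n * r : ℤ) : ℂ) := by
            field_simp at hn
            push_cast
            have h2 : (2 * (Real.pi : ℂ) * Complex.I) * (1 + (k : ℂ)) =
                (2 * (Real.pi : ℂ) * Complex.I) * ((n : ℂ) * (r : ℂ)) := by
              linear_combination (Real.pi : ℂ) * Complex.I * hn
            exact mul_left_cancel₀
              (by simpa [mul_assoc] using mul_ne_zero two_ne_zero hpi) h2
          have hn4 : 1 + k = n * r := by exact_mod_cast hn3
          obtain ⟨j, hj, hjk⟩ := Finset.mem_image.1 hk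
          rw [Finset.mem_range] at hj
          -- bounds: 2 - r ≤ 1 + k ≤ r, so n = 0 or n = 1
          have hrz : (2 : ℤ) ≤ (r : ℤ) := by exact_mod_cast hr
          have hb1 : 2 - (r : ℤ) ≤ 1 + k := by omega
          have hb2 : 1 + k ≤ (r : ℤ) := by omega
          have hnn : 0 ≤ n := by
            by_contra hneg
            push_neg at hneg
            have h5 : n * (r : ℤ) ≤ -1 * (r : ℤ) :=
              mul_le_mul_of_nonneg_right (by omega) (by omega)
            linarith
          have hn1 : n ≤ 1 := by
            by_contra hbig
            push_neg at hbig
            have h5 : 2 * (r : ℤ) ≤ n * (r : ℤ) :=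
              mul_le_mul_of_nonneg_right (by omega) (by omega)
            linarith
          interval_cases n <;> omega
        have hcont : Tendsto (fun β : ℂ => br r ((r : ℂ) * β) / br r (β + (k : ℂ)))
            (nhdsWithin 1 {(1 : ℂ)}ᶜ) (nhds 0) := by
          have h1 : Continuous fun β : ℂ => br r ((r : ℂ) * β) := by
            simp only [hbrk]
            fun_prop
          have h2 : Continuous fun β : ℂ => br r (β + (k : ℂ)) := by
            simp only [hbrk]
            fun_prop
          have := (h1.tendsto 1).div (h2.tendsto 1) (by simpa using hkne)
          rw [hf1, zero_div] at this
          exact this.mono_left nhdsWithin_le_nhds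
        have := hcont.pow (2 * g - 2)
        rw [zero_pow (by omega)] at this
        have hLk : L k = 0 := by simp [hL, hk1, hk2]
        rw [hLk]
        exact this
  -- sum of limits
  have hsum := tendsto_finset_sum (Hr r) hterm
  have hfinal := hsum.const_mul (((r : ℂ) / 2) ^ g / (r : ℂ))
  -- compute the sum of L
  have hm1 : (-1 : ℤ) ∈ Hr r := by
    obtain ⟨t, ht⟩ := heven
    exact Finset.mem_image.2 ⟨t - 1, Finset.mem_range.2 (by omega), by omega⟩
  have hm2 : (r : ℤ) - 1 ∈ Hr r := by
    exact Finset.mem_image.2 ⟨r - 1, Finset.mem_range.2 (by omega), by omega⟩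
  have hsub : ({-1, (r : ℤ) - 1} : Finset ℤ) ⊆ Hr r := by
    intro x hx
    rcases Finset.mem_insert.1 hx with h | h
    · exact h ▸ hm1
    · rw [Finset.mem_singleton.1 h]; exact hm2
  have hsumL : ∑ k ∈ Hr r, L k = (r : ℂ) ^ (2 * g - 2) + (r : ℂ) ^ (2 * g - 2) := by
    rw [← Finset.sum_subset hsub (fun x _ hx => by
      simp only [Finset.mem_insert, Finset.mem_singleton, not_or] at hx
      simp [hL, hx.1, hx.2])]
    rw [Finset.sum_pair (by omega : (-1 : ℤ) ≠ (r : ℤ) - 1)]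
    simp [hL]
  rw [hsumL] at hfinal
  have halg : ((r : ℂ) / 2) ^ g / (r : ℂ) * ((r : ℂ) ^ (2 * g - 2) + (r : ℂ) ^ (2 * g - 2)) =
      (r : ℂ) ^ (3 * g - 3) / 2 ^ (g - 1) := by
    obtain ⟨m, rfl⟩ : ∃ m, g = m + 2 := ⟨g - 2, by omega⟩
    rw [show 2 * (m + 2) - 2 = 2 * m + 2 by omega, show 3 * (m + 2) - 3 = 3 * m + 3 by omega,
      show (m + 2) - 1 = m + 1 by omega, div_pow]
    field_simp
    ring
  rw [halg] at hfinal
  exact hfinal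
end

section
/- Let r ≥ 2 be an even integer and let β ∈ ℂ be such that ⦃β+k⦄ ≠ 0 for every k ∈ H_r. Then ((r/2)²/r) · Σ_{k ∈ H_r} (⦃rβ⦄/⦃β+k⦄)² = (r/2)³ · (2 − q^{rβ} − q^{−rβ}). (This is the genus-2 graded Verlinde formula of the paper: dim_t 𝕍(Σ₂) = (r')³(−t^{−1} + 2 − t) with t = q^{−2r'β} = q^{−rβ}, showing that for r even the degree ±1 parts of 𝕍(Σ₂) have dimension (r')³.) -/
open Polynomial Finset Complex

lemma derivative_finset_prod {ι : Type*} [DecidableEq ι] (s : Finset ι) (f : ι → ℂ[X]) :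
    derivative (∏ i ∈ s, f i) = ∑ i ∈ s, (∏ j ∈ s.erase i, f j) * derivative (f i) := by
  rw [Finset.prod_eq_multiset_prod, Polynomial.derivative_prod]
  rfl

lemma sum_prod_erase_eq (s : Finset ℤ) (g : ℤ → ℂ) :
    ∑ k ∈ s, ∑ i ∈ s.erase k, g k * g i = (∑ k ∈ s, g k)^2 - ∑ k ∈ s, (g k)^2 := by
  have : ∀ k ∈ s, ∑ i ∈ s.erase k, g k * g i = g k * ((∑ i ∈ s, g i) - g k) := by
    intro k hk
    rw [← Finset.mul_sum, Finset.sum_erase_eq_sub hk]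
  rw [Finset.sum_congr rfl this]
  rw [Finset.sum_congr rfl (fun k _ => mul_sub (g k) _ _), Finset.sum_sub_distrib,
    ← Finset.sum_mul, sq]
  congr 1
  exact Finset.sum_congr rfl (fun k _ => (sq (g k)).symm)

lemma key_sums (s : Finset ℤ) (f : ℤ → ℂ) (n : ℕ) (hn : 2 ≤ n) (c x : ℂ)
    (hP : (∏ k ∈ s, (X - C (f k))) = X ^ n + C c)
    (hx : ∀ k ∈ s, x - f k ≠ 0) :
    (x ^ n + c ≠ 0) ∧
    (∑ k ∈ s, (x - f k)⁻¹ = n * x ^ (n-1) / (x ^ n + c)) ∧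
    (∑ k ∈ s, ((x - f k)⁻¹) ^ 2
      = ((n : ℂ) * x ^ (n-1) / (x ^ n + c)) ^ 2
        - (n : ℂ) * ((n-1 : ℕ) : ℂ) * x ^ (n-2) / (x ^ n + c)) := by
  have hev : ∏ k ∈ s, (x - f k) = x ^ n + c := by
    have := congrArg (Polynomial.eval x) hP
    simpa [eval_prod] using this
  have h0 : x ^ n + c ≠ 0 := hev ▸ Finset.prod_ne_zero_iff.mpr hx
  -- first derivative
  have hD1 : ∑ k ∈ s, (∏ j ∈ s.erase k, (X - C (f j))) = C (n : ℂ) * X ^ (n-1) := by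
    have := congrArg derivative hP
    rw [derivative_finset_prod] at this
    simp only [derivative_sub, derivative_X, derivative_C, sub_zero, mul_one,
      derivative_add, derivative_X_pow, add_zero] at this
    exact this
  have herase : ∀ k ∈ s, ∏ j ∈ s.erase k, (x - f j) = (x ^ n + c) * (x - f k)⁻¹ := by
    intro k hk
    rw [eq_mul_inv_iff_mul_eq₀ (hx k hk), mul_comm,
      Finset.mul_prod_erase s (fun j => x - f j) hk, hev]
  have hsum1 : ∑ k ∈ s, (x - f k)⁻¹ = n * x ^ (n-1) / (x ^ n + c) := by
    have := congrArg (Polynomial.eval x) hD1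
    simp only [eval_finset_sum, eval_prod, eval_sub, eval_X, eval_C, eval_mul, eval_pow] at this
    rw [Finset.sum_congr rfl herase, ← Finset.mul_sum] at this
    rw [eq_div_iff h0, mul_comm, this]
  refine ⟨h0, hsum1, ?_⟩
  -- second derivative
  have hD2 : ∑ k ∈ s, ∑ i ∈ s.erase k, (∏ j ∈ (s.erase k).erase i, (X - C (f j)))
      = C (n : ℂ) * (C ((n-1 : ℕ) : ℂ) * X ^ (n-2)) := by
    have := congrArg derivative hD1
    rw [derivative_sum] at this
    simp only [derivative_finset_prod, derivative_sub, derivative_X, derivative_C, sub_zero,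
      mul_one, derivative_mul, derivative_X_pow, zero_mul, zero_add] at this
    have h12 : n - 1 - 1 = n - 2 := by omega
    rw [h12] at this
    exact this
  have herase2 : ∀ k ∈ s, ∀ i ∈ s.erase k,
      ∏ j ∈ (s.erase k).erase i, (x - f j) = (x ^ n + c) * ((x - f k)⁻¹ * (x - f i)⁻¹) := by
    intro k hk i hi
    have hxi : x - f i ≠ 0 := hx i (Finset.mem_of_mem_erase hi)
    have h2 : (x - f i) * ∏ j ∈ (s.erase k).erase i, (x - f j)
        = (x ^ n + c) * (x - f k)⁻¹ := by
      rw [Finset.mul_prod_erase (s.erase k) (fun j => x - f j) hi, herase k hk]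
    rw [show (x ^ n + c) * ((x - f k)⁻¹ * (x - f i)⁻¹)
        = ((x ^ n + c) * (x - f k)⁻¹) * (x - f i)⁻¹ by ring,
      eq_mul_inv_iff_mul_eq₀ hxi, mul_comm]
    exact h2
  have hev2 : (x ^ n + c) * ((∑ k ∈ s, (x - f k)⁻¹) ^ 2 - ∑ k ∈ s, ((x - f k)⁻¹) ^ 2)
      = (n : ℂ) * ((n-1 : ℕ) : ℂ) * x ^ (n-2) := by
    have := congrArg (Polynomial.eval x) hD2
    simp only [eval_finset_sum, eval_prod, eval_sub, eval_X, eval_C, eval_mul, eval_pow] at this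
    rw [Finset.sum_congr rfl (fun k hk => Finset.sum_congr rfl (herase2 k hk))] at this
    simp only [← Finset.mul_sum] at this
    rw [Finset.sum_congr rfl (fun k _ => (Finset.mul_sum _ _ _ : (x - f k)⁻¹ * _ = _)),
      sum_prod_erase_eq] at this
    rw [this]
    ring
  have h3 : (∑ k ∈ s, (x - f k)⁻¹) ^ 2 - ∑ k ∈ s, ((x - f k)⁻¹) ^ 2
      = (n : ℂ) * ((n-1 : ℕ) : ℂ) * x ^ (n-2) / (x ^ n + c) := by
    rw [eq_div_iff h0, mul_comm]
    exact hev2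
  rw [← hsum1, ← h3]
  ring

lemma qc_add (r : ℕ) (x y : ℂ) : qc r (x + y) = qc r x * qc r y := by
  rw [qc, qc, qc, ← Complex.exp_add]; congr 1; ring

lemma qc_ne (r : ℕ) (x : ℂ) : qc r x ≠ 0 := Complex.exp_ne_zero _

lemma qc_neg (r : ℕ) (x : ℂ) : qc r (-x) = (qc r x)⁻¹ := by
  rw [qc, qc, ← Complex.exp_neg]; congr 1; ring

lemma qc_pow (r : ℕ) (hr : r ≠ 0) (x : ℂ) :
    (qc r x) ^ r = Complex.exp (Real.pi * Complex.I * x) := by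
  rw [qc, ← Complex.exp_nat_mul]
  congr 1
  have : (r : ℂ) ≠ 0 := Nat.cast_ne_zero.mpr hr
  field_simp

lemma qc_odd_pow (r : ℕ) (hr : r ≠ 0) (β : ℂ) (k : ℤ) (hk : Odd k) :
    (qc r (β + (k : ℂ))) ^ r = -(qc r ((r : ℂ) * β)) := by
  have ht : qc r ((r : ℂ) * β) = Complex.exp (Real.pi * Complex.I * β) := by
    rw [qc]
    congr 1
    have : (r : ℂ) ≠ 0 := Nat.cast_ne_zero.mpr hr
    field_simp
  rw [qc_pow r hr, ht, mul_add, Complex.exp_add]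
  have : Complex.exp (Real.pi * Complex.I * (k : ℂ)) = -1 := by
    rw [mul_comm, Complex.exp_int_mul, Complex.exp_pi_mul_I]
    exact Odd.neg_one_zpow hk
  rw [this]
  ring

lemma prod_formula (r : ℕ) (hr : 2 ≤ r) (heven : Even r) (β : ℂ) :
    ∏ k ∈ Hr r, (X - C (qc r (β + (k : ℂ)))) = X ^ r + C (qc r ((r : ℂ) * β)) := by
  have hr0 : r ≠ 0 := by omega
  have hα : (qc r (β + ((1 : ℂ) - r))) ^ r = -(qc r ((r : ℂ) * β)) := by
    have : ((((1 : ℤ) - r) : ℤ) : ℂ) = (1 : ℂ) - r := by push_cast; ring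
    rw [← this]
    exact qc_odd_pow r hr0 β (1 - r) (Odd.sub_even odd_one (Int.even_coe_nat r |>.mpr heven))
  have hprim : IsPrimitiveRoot (Complex.exp (2 * Real.pi * Complex.I / r)) r :=
    Complex.isPrimitiveRoot_exp r hr0
  have key := X_pow_sub_C_eq_prod hprim (by omega : 0 < r) hα
  rw [Hr, Finset.prod_image]
  · rw [show X ^ r + C (qc r ((r:ℂ) * β)) = X ^ r - C (-(qc r ((r:ℂ) * β))) by
      rw [map_neg, sub_neg_eq_add], key]
    apply Finset.prod_congr rfl
    intro j hj
    congr 2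
    -- qc r (β + (2j - (r-1))) = ω^j * α
    have hcast : (((2 * (j : ℤ) - ((r : ℤ) - 1)) : ℤ) : ℂ) = ((1:ℂ) - r) + 2 * j := by
      push_cast; ring
    rw [hcast, show β + (((1:ℂ) - r) + 2 * j) = (β + ((1:ℂ) - r)) + 2 * j by ring,
      qc_add, mul_comm]
    congr 1
    rw [qc, ← Complex.exp_nat_mul]
    congr 1
    ring
  · intro a _ b _ hab
    simp only at hab
    omega

/-- for even `r ≥ 2` and `β` with `⦃β+k⦄ ≠ 0` for all `k ∈ H_r`,
`((r/2)²/r) · Σ_{k ∈ H_r} (⦃rβ⦄/⦃β+k⦄)² = (r/2)³ · (2 − q^{rβ} − q^{−rβ})`. -/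
theorem statement5 (r : ℕ) (hr : 2 ≤ r) (heven : Even r) (β : ℂ)
    (h : ∀ k ∈ Hr r, br r (β + (k : ℂ)) ≠ 0) :
    (((r : ℂ) / 2) ^ 2 / (r : ℂ)) *
        ∑ k ∈ Hr r, (br r ((r : ℂ) * β) / br r (β + (k : ℂ))) ^ 2
      = ((r : ℂ) / 2) ^ 3 * (2 - qc r ((r : ℂ) * β) - qc r (-((r : ℂ) * β))) := by
  have hr0 : r ≠ 0 := by omega
  have hrC : (r : ℂ) ≠ 0 := Nat.cast_ne_zero.mpr hr0
  set t := qc r ((r : ℂ) * β) with ht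
  have ht0 : t ≠ 0 := qc_ne _ _
  set a : ℤ → ℂ := fun k => qc r (β + (k : ℂ)) with ha
  have hbr : ∀ k : ℤ, br r (β + (k : ℂ)) = a k - (a k)⁻¹ := by
    intro k; rw [br, ← qc_neg]
  have hbrt : br r ((r : ℂ) * β) = t - t⁻¹ := by rw [br, ← qc_neg]
  have hqneg : qc r (-((r : ℂ) * β)) = t⁻¹ := qc_neg _ _
  have hane : ∀ k ∈ Hr r, a k ≠ 0 := fun k _ => qc_ne _ _
  have hbne : ∀ k ∈ Hr r, a k - (a k)⁻¹ ≠ 0 := by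
    intro k hk; rw [← hbr]; exact h k hk
  have h1 : ∀ k ∈ Hr r, (1 : ℂ) - a k ≠ 0 := by
    intro k hk hc
    have h1' : a k = 1 := by linear_combination -hc
    exact hbne k hk (by rw [h1']; norm_num)
  have hm1 : ∀ k ∈ Hr r, (-1 : ℂ) - a k ≠ 0 := by
    intro k hk hc
    have h1' : a k = -1 := by linear_combination -hc
    exact hbne k hk (by rw [h1']; norm_num)
  have hP : (∏ k ∈ Hr r, (X - C (a k))) = X ^ r + C t := prod_formula r hr heven β
  obtain ⟨h0p, hs1p, hs2p⟩ := key_sums (Hr r) a r hr t 1 hP h1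
  obtain ⟨h0m, hs1m, hs2m⟩ := key_sums (Hr r) a r hr t (-1) hP hm1
  have h1t : (1 : ℂ) + t ≠ 0 := by simpa using h0p
  -- simplify powers of ±1
  have hoddr1 : Odd (r - 1) := Nat.Even.sub_odd (by omega) heven odd_one
  have hevenr2 : Even (r - 2) := by
    obtain ⟨m, hm⟩ := heven; exact ⟨m - 1, by omega⟩
  have hm1r : ((-1 : ℂ)) ^ r = 1 := heven.neg_one_pow
  have hm1r1 : ((-1 : ℂ)) ^ (r - 1) = -1 := hoddr1.neg_one_pow
  have hm1r2 : ((-1 : ℂ)) ^ (r - 2) = 1 := hevenr2.neg_one_pow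
  rw [one_pow, one_pow] at hs1p hs2p
  rw [one_pow] at hs2p
  rw [hm1r, hm1r1] at hs1m
  rw [hm1r, hm1r1, hm1r2] at hs2m
  have hcast : ((r - 1 : ℕ) : ℂ) = (r : ℂ) - 1 := by
    push_cast [Nat.cast_sub (by omega : 1 ≤ r)]; ring
  rw [hcast] at hs2p hs2m
  rw [mul_one] at hs1p hs2p hs2m
  -- per-term partial fraction decomposition
  have hterm : ∀ k ∈ Hr r,
      (br r ((r : ℂ) * β) / br r (β + (k : ℂ))) ^ 2
        = (t - t⁻¹) ^ 2 *
            ((1/4) * ((1 - a k)⁻¹) ^ 2 + (1/4) * (((-1 : ℂ) - a k)⁻¹) ^ 2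
              - (1/4) * (1 - a k)⁻¹ + (1/4) * ((-1 : ℂ) - a k)⁻¹) := by
    intro k hk
    have h3 := hane k hk
    have h4 := h1 k hk
    have h6 : (1 : ℂ) + a k ≠ 0 := fun hc => hm1 k hk (by linear_combination -hc)
    have hu := mul_inv_cancel₀ h4
    have hv := mul_inv_cancel₀ h6
    have hb := mul_inv_cancel₀ h3
    have hneg : ((-1 : ℂ) - a k)⁻¹ = -(1 + a k)⁻¹ := by
      rw [show (-1 : ℂ) - a k = -(1 + a k) by ring, inv_neg]
    have key : (a k) ^ 2 * ((1 - a k)⁻¹) ^ 2 * ((1 + a k)⁻¹) ^ 2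
        = (1/4) * ((1 - a k)⁻¹) ^ 2 + (1/4) * ((1 + a k)⁻¹) ^ 2
          - (1/4) * (1 - a k)⁻¹ - (1/4) * (1 + a k)⁻¹ := by
      linear_combination
        ((1/4 : ℂ) * ((1 + a k)⁻¹ *
          (2 * (1 - a k)⁻¹ * (1 + a k)⁻¹ - 3 * (1 - a k)⁻¹ + (1 + a k)⁻¹ - 1))) * hu
        + ((1/4 : ℂ) * (8 * ((1 - a k)⁻¹) ^ 2 - 8 * ((1 - a k)⁻¹) ^ 2 * (1 + a k)⁻¹
            + 4 * ((1 - a k)⁻¹) ^ 2 * ((1 + a k) * (1 + a k)⁻¹ - 1)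
            + (1 - a k)⁻¹ * (2 * (1 - a k)⁻¹ * (1 + a k)⁻¹ - 3 * (1 - a k)⁻¹
                + (1 + a k)⁻¹ - 1))) * hv
    have hinv : (a k - (a k)⁻¹)⁻¹ = -(a k * ((1 - a k)⁻¹ * (1 + a k)⁻¹)) := by
      apply inv_eq_of_mul_eq_one_left
      linear_combination ((1 + a k) * (1 + a k)⁻¹) * hu + hv
        + ((1 - a k)⁻¹ * (1 + a k)⁻¹) * hb
    rw [hbrt, hbr, div_eq_mul_inv, hinv, hneg]
    linear_combination (t - t⁻¹) ^ 2 * key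
  rw [Finset.sum_congr rfl hterm, ← Finset.mul_sum]
  have hsplit : ∑ k ∈ Hr r,
      ((1/4) * ((1 - a k)⁻¹) ^ 2 + (1/4) * (((-1 : ℂ) - a k)⁻¹) ^ 2
        - (1/4) * (1 - a k)⁻¹ + (1/4) * ((-1 : ℂ) - a k)⁻¹)
      = (1/4) * (∑ k ∈ Hr r, ((1 - a k)⁻¹) ^ 2)
        + (1/4) * (∑ k ∈ Hr r, (((-1 : ℂ) - a k)⁻¹) ^ 2)
        - (1/4) * (∑ k ∈ Hr r, (1 - a k)⁻¹)
        + (1/4) * (∑ k ∈ Hr r, ((-1 : ℂ) - a k)⁻¹) := by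
    simp only [Finset.sum_add_distrib, Finset.sum_sub_distrib, Finset.mul_sum]
  rw [hsplit, hs1p, hs1m, hs2p, hs2m, hqneg]
  have hR1 : t * t⁻¹ = 1 := mul_inv_cancel₀ ht0
  have hR2 : (1 + t) * (1 + t)⁻¹ = 1 := mul_inv_cancel₀ h1t
  have hR3 : (r : ℂ) * (r : ℂ)⁻¹ = 1 := mul_inv_cancel₀ hrC
  linear_combination
    ((r : ℂ)^3/8 * (1+t)⁻¹ + (r : ℂ)^3/8 * ((1+t)⁻¹)^2
      - (r : ℂ)^3/8 * t⁻¹ * ((1+t)⁻¹)^2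
      + (r : ℂ)^4/4 * (1+t)⁻¹ * (r : ℂ)⁻¹
      - (r : ℂ)^4/4 * ((1+t)⁻¹)^2 * (r : ℂ)⁻¹) * hR1
    + (-(r : ℂ)^3/8 * t⁻¹ - (r : ℂ)^3/8 * t⁻¹ * (1+t)⁻¹
      + (r : ℂ)^3/8 * (t⁻¹)^2 * (1+t)⁻¹
      + (r : ℂ)^4/4 * (r : ℂ)⁻¹
      - (r : ℂ)^4/8 * (1+t)⁻¹ * (r : ℂ)⁻¹
      - (r : ℂ)^4/8 * t * (r : ℂ)⁻¹
      + (r : ℂ)^4/8 * t * (1+t)⁻¹ * (r : ℂ)⁻¹) * hR2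
    + ((r : ℂ)^3/4 - (r : ℂ)^3/8 * (1+t)⁻¹ - (r : ℂ)^3/8 * ((1+t)⁻¹)^2
      - (r : ℂ)^3/8 * (t⁻¹)^2 * (1+t)⁻¹
      + (r : ℂ)^3/8 * (t⁻¹)^2 * ((1+t)⁻¹)^2
      - (r : ℂ)^3/8 * t) * hR3
end

section
/- Let g ≥ 2 be an integer, let M = Fin g → ℤ with standard ℤ-basis (x_i), let A = ℂ ⧸ 2ℤ (the quotient of the additive group ℂ by the subgroup of integer multiples of 2), and let ω : M → A be an additive group homomorphism. Call an element of A integral if it is the image of an integer under the quotient map ℂ → A. Assume 2·ω(x₀) is not integral. Then there exists a ℤ-basis (y_i) of M with y₀ = x₀ such that for every i with 1 ≤ i ≤ g−1, neither ω(y_i) nor ω(y₀ − y_i) is integral. (This is the basis-modification step in the proof of the paper's proposition on the existence of ω-regular spines: a handlebody bounding a genus-g surface with cohomology class ω contains an ω-regular spine iff 2ω is non-integral.) -/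
/-- The quotient group `ℂ ⧸ 2ℤ`. -/
abbrev CModTwoZ : Type := ℂ ⧸ AddSubgroup.zmultiples (2 : ℂ)

/-- An element of `ℂ ⧸ 2ℤ` is integral if it is the image of an integer. -/
def IsIntegralC2Z (a : CModTwoZ) : Prop :=
  ∃ n : ℤ, (QuotientAddGroup.mk (n : ℂ) : CModTwoZ) = a

lemma int_sub {x y : CModTwoZ} (hx : IsIntegralC2Z x) (hy : IsIntegralC2Z y) :
    IsIntegralC2Z (x - y) := by
  obtain ⟨n, hn⟩ := hx; obtain ⟨m, hm⟩ := hy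
  refine ⟨n - m, ?_⟩
  rw [← hn, ← hm, ← QuotientAddGroup.mk_sub]
  push_cast; rfl

lemma int_zero : IsIntegralC2Z (0 : CModTwoZ) := ⟨0, by simp⟩

lemma int_neg {x : CModTwoZ} (hx : IsIntegralC2Z x) : IsIntegralC2Z (-x) := by
  simpa using int_sub int_zero hx

lemma key_s8 (a : CModTwoZ) (h2 : ¬ IsIntegralC2Z ((2:ℤ) • a)) (b : CModTwoZ) :
    ∃ c : ℤ, ¬ IsIntegralC2Z (b + c • a) ∧ ¬ IsIntegralC2Z (b + (c - 1) • a) := by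
  have ha : ¬ IsIntegralC2Z a := by
    intro hi
    obtain ⟨n, hn⟩ := hi
    refine h2 ⟨2 * n, ?_⟩
    rw [← hn, ← QuotientAddGroup.mk_zsmul]
    congr 1; simp [zsmul_eq_mul]
  by_cases hb : IsIntegralC2Z b
  · refine ⟨2, fun hi => ?_, fun hi => ?_⟩
    · exact h2 (by simpa using int_sub hi hb)
    · exact ha (by simpa using int_sub hi hb)
  · by_cases hba : IsIntegralC2Z (b - a)
    · refine ⟨1, fun hi => ?_, by simpa using hb⟩
      exact h2 (by have := int_sub hi hba; rw [two_zsmul]; simpa using this)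
    · exact ⟨0, by simpa using hb, by simpa [sub_eq_add_neg] using hba⟩

def Tmap {g : ℕ} (z : Fin g) (c : Fin g → ℤ) : (Fin g → ℤ) →ₗ[ℤ] (Fin g → ℤ) where
  toFun v := v + (∑ i, c i * v i) • Pi.single z 1
  map_add' x y := by
    simp only [Pi.add_apply, mul_add, Finset.sum_add_distrib, add_smul]
    abel
  map_smul' r v := by
    simp only [Pi.smul_apply, smul_eq_mul, RingHom.id_apply, smul_add, smul_smul]
    congr 2
    rw [Finset.mul_sum]
    exact Finset.sum_congr rfl fun i _ => by ring

lemma Tmap_comp {g : ℕ} (z : Fin g) (c : Fin g → ℤ) (hz : c z = 0) (v : Fin g → ℤ) :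
    Tmap z (-c) (Tmap z c v) = v := by
  simp only [Tmap, LinearMap.coe_mk, AddHom.coe_mk, Pi.add_apply, Pi.neg_apply,
    Pi.smul_apply, smul_eq_mul]
  have hs : ∀ i, (Pi.single z 1 : Fin g → ℤ) i = if i = z then 1 else 0 := fun i => by simp [Pi.single_apply]
  have : ∑ i, -c i * (v i + (∑ j, c j * v j) * (Pi.single z 1 : Fin g → ℤ) i)
      = -∑ j, c j * v j := by
    simp only [hs, mul_ite, mul_one, mul_zero, mul_add, Finset.sum_add_distrib,
      neg_mul, Finset.sum_neg_distrib]
    rw [Finset.sum_ite_eq' Finset.univ z]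
    simp [hz]
  rw [this]
  simp [add_smul]

def Teq {g : ℕ} (z : Fin g) (c : Fin g → ℤ) (hz : c z = 0) :
    (Fin g → ℤ) ≃ₗ[ℤ] (Fin g → ℤ) :=
  LinearEquiv.ofLinear (Tmap z c) (Tmap z (-c))
    (LinearMap.ext fun v => by
      have := Tmap_comp z (-c) (by simp [hz]) v
      rwa [neg_neg] at this)
    (LinearMap.ext fun v => Tmap_comp z c hz v)

lemma Tmap_single {g : ℕ} (z : Fin g) (c : Fin g → ℤ) (i : Fin g) :
    Tmap z c (Pi.single i 1) = Pi.single i 1 + c i • Pi.single z 1 := by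
  simp only [Tmap, LinearMap.coe_mk, AddHom.coe_mk]
  congr 1
  congr 1
  simp [Pi.single_apply, mul_ite, Finset.sum_ite_eq']

/-- if `2·ω(x₀)` is non-integral, there is a ℤ-basis `(y_i)` of `Fin g → ℤ`
with `y₀ = x₀` and, for all `i ≠ 0`, neither `ω(y_i)` nor `ω(y₀ − y_i)` integral. -/
theorem statement8 (g : ℕ) (hg : 2 ≤ g)
    (ω : (Fin g → ℤ) →+ CModTwoZ)
    (h : ¬ IsIntegralC2Z (2 • ω (Pi.single (⟨0, by omega⟩ : Fin g) 1))) :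
    ∃ b : Module.Basis (Fin g) ℤ (Fin g → ℤ),
      b ⟨0, by omega⟩ = Pi.single (⟨0, by omega⟩ : Fin g) 1 ∧
      ∀ i : Fin g, i ≠ ⟨0, by omega⟩ →
        ¬ IsIntegralC2Z (ω (b i)) ∧ ¬ IsIntegralC2Z (ω (b ⟨0, by omega⟩ - b i)) := by
  set z : Fin g := ⟨0, by omega⟩ with hzdef
  set a : CModTwoZ := ω (Pi.single z 1) with hadef
  have h2 : ¬ IsIntegralC2Z ((2:ℤ) • a) := by
    intro hi; apply h; rw [show (2 • a) = (2:ℤ) • a by rw [two_nsmul, two_zsmul]]; exact hi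
  set c : Fin g → ℤ := fun i => if i = z then 0 else (key_s8 a h2 (ω (Pi.single i 1))).choose
    with hcdef
  have hcz : c z = 0 := by simp [hcdef]
  have hb : ∀ i : Fin g, (Pi.basisFun ℤ (Fin g)) i = Pi.single i 1 := fun i => by
    ext j; simp [Pi.basisFun_apply, Pi.single_apply, eq_comm]
  refine ⟨(Pi.basisFun ℤ (Fin g)).map (Teq z c hcz), ?_, ?_⟩
  · rw [Module.Basis.map_apply, hb, Teq]
    simp [Tmap_single, hcz]
  · intro i hi
    have hci : c i = (key_s8 a h2 (ω (Pi.single i 1))).choose := by have hiz : i ≠ z := hi; simp [hcdef, hiz]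
    have spec := (key_s8 a h2 (ω (Pi.single i 1))).choose_spec
    rw [← hci] at spec
    have hbi : ((Pi.basisFun ℤ (Fin g)).map (Teq z c hcz)) i
        = Pi.single i 1 + c i • Pi.single z 1 := by
      rw [Module.Basis.map_apply, hb, Teq]; exact Tmap_single z c i
    have hbz : ((Pi.basisFun ℤ (Fin g)).map (Teq z c hcz)) z = Pi.single z 1 := by
      rw [Module.Basis.map_apply, hb, Teq]; simp [Tmap_single, hcz]
    constructor
    · rw [hbi, map_add, AddMonoidHom.map_zsmul]
      exact spec.1
    · intro hcon
      apply spec.2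
      have := int_neg hcon
      rw [← map_neg, neg_sub, hbz, hbi] at this
      have heq : ω (Pi.single i 1 + c i • Pi.single z 1 - Pi.single z 1)
          = ω (Pi.single i 1) + (c i - 1) • a := by
        rw [map_sub, map_add, AddMonoidHom.map_zsmul, sub_smul, one_smul, hadef]
        abel
      rwa [heq] at this
end

section
/- Let p ≥ 1 be an integer and let q, q′, c be integers each coprime to p. Suppose that for every ζ ∈ ℂ with ζ^p = 1 and ζ ≠ 1, (1−ζ^{q})(1−ζ)(1−ζ^{−q})(1−ζ^{−1}) = (1−ζ^{c·q′})(1−ζ^{c})(1−ζ^{−c·q′})(1−ζ^{−c}), where the powers of ζ are integer powers (ζ ≠ 0). Then the multiset {1, −1, (q : ZMod p), −(q : ZMod p)} equals the multiset {(c : ZMod p), −(c : ZMod p), (c·q′ : ZMod p), −(c·q′ : ZMod p)} in ZMod p. (This is the step in the proof of the paper's lens-space classification proposition obtained by applying Franz's Lemma to the absolute values of the r = 2 quantum invariants of lens spaces.) -/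
open Finsupp Polynomial

variable {p : ℕ}

noncomputable def exq (x y t : ZMod p) : ℚ :=
  (if (0:ZMod p) = t then (4:ℚ) else 0)
  - (if x = t then (2:ℚ) else 0) - (if -x = t then (2:ℚ) else 0)
  - (if y = t then (2:ℚ) else 0) - (if -y = t then (2:ℚ) else 0)
  + (if x + y = t then (1:ℚ) else 0) + (if x - y = t then (1:ℚ) else 0)
  + (if y - x = t then (1:ℚ) else 0) + (if -x - y = t then (1:ℚ) else 0)

lemma exq_neg_left (x y t : ZMod p) : exq (-x) y t = exq x y t := by
  unfold exq
  rw [neg_neg, neg_add_eq_sub, sub_neg_eq_add, show -x - y = -(x+y) by ring,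
    add_comm y x, show -(x+y) = -x - y by ring]
  ring

lemma exq_swap (x y t : ZMod p) : exq y x t = exq x y t := by
  unfold exq
  rw [add_comm y x, show -y - x = -x - y by ring]
  ring

lemma zmodTwoNeZero (hp : 3 ≤ p) : (2 : ZMod p) ≠ 0 := by
  intro h
  rw [show ((2:ZMod p)) = ((2:ℕ) : ZMod p) by norm_num, ZMod.natCast_eq_zero_iff] at h
  exact absurd (Nat.le_of_dvd two_pos h) (by omega)

lemma unit_two_mul_ne_zero (hp : 3 ≤ p) {x : ZMod p} (hx : IsUnit x) :
    (2 : ZMod p) * x ≠ 0 := by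
  intro h
  exact zmodTwoNeZero hp ((hx.mul_left_eq_zero).mp h)

lemma unit_ne_neg_self (hp : 3 ≤ p) {x : ZMod p} (hx : IsUnit x) : x ≠ -x := by
  intro h
  exact unit_two_mul_ne_zero hp hx (by linear_combination h)

lemma unit_ne_zero' (hp : 3 ≤ p) {x : ZMod p} (hx : IsUnit x) : x ≠ 0 := by
  haveI : Fact (1 < p) := ⟨by omega⟩
  exact hx.ne_zero

lemma exq_neg_at (hp : 3 ≤ p) {x y : ZMod p} (hx : IsUnit x) (hy : IsUnit y) :
    exq x y x < 0 := by
  unfold exq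
  rw [if_pos rfl, if_neg (unit_ne_zero' hp hx).symm,
    if_neg (Ne.symm (unit_ne_neg_self hp hx)),
    if_neg (show ¬ x + y = x by intro h; exact unit_ne_zero' hp hy (by linear_combination h)),
    if_neg (show ¬ x - y = x by intro h; exact unit_ne_zero' hp hy (by linear_combination -h))]
  by_cases h1 : y - x = x
  · rw [if_pos h1, if_neg (show ¬ -x - y = x by
      intro h2
      exact unit_two_mul_ne_zero hp hy (by linear_combination h1 - h2))]
    split_ifs <;> norm_num
  · rw [if_neg h1]
    split_ifs <;> norm_num

lemma exq_neg (hp : 3 ≤ p) {x y : ZMod p} (hx : IsUnit x) (hy : IsUnit y) (t : ZMod p)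
    (hmem : x = t ∨ -x = t ∨ y = t ∨ -y = t) : exq x y t < 0 := by
  rcases hmem with rfl | rfl | rfl | rfl
  · exact exq_neg_at hp hx hy
  · rw [← exq_neg_left]; exact exq_neg_at hp hx.neg hy
  · rw [← exq_swap]; exact exq_neg_at hp hy hx
  · rw [← exq_swap, ← exq_neg_left]; exact exq_neg_at hp hy.neg hx

lemma exq_mem {x y : ZMod p} (t : ZMod p) (hneg : exq x y t < 0) :
    x = t ∨ -x = t ∨ y = t ∨ -y = t := by
  by_contra hcon
  push_neg at hcon
  obtain ⟨h1, h2, h3, h4⟩ := hcon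
  refine absurd hneg (not_lt.mpr ?_)
  unfold exq
  rw [if_neg h1, if_neg h2, if_neg h3, if_neg h4]
  split_ifs <;> norm_num

lemma multiset_perm_helper (u v : ZMod p) :
    ({u, v, u, v} : Multiset (ZMod p)) = {v, u, v, u} := by
  simp only [Multiset.insert_eq_cons]
  have inner : (u ::ₘ v ::ₘ (0 : Multiset (ZMod p))) = v ::ₘ u ::ₘ 0 :=
    Multiset.cons_swap u v 0
  calc u ::ₘ v ::ₘ u ::ₘ v ::ₘ (0 : Multiset (ZMod p))
      = u ::ₘ v ::ₘ (v ::ₘ u ::ₘ 0) := by rw [inner]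
    _ = v ::ₘ u ::ₘ v ::ₘ u ::ₘ 0 := by rw [Multiset.cons_swap u v]

lemma multiset_inner_swap (u v w z : ZMod p) :
    ({u, v, w, z} : Multiset (ZMod p)) = {u, v, z, w} := by
  simp only [Multiset.insert_eq_cons]
  exact congrArg _ (congrArg _ (Multiset.cons_swap _ _ _))

lemma key_s11 (hp : 3 ≤ p) {a b c d : ZMod p} (ha : IsUnit a) (hb : IsUnit b)
    (hc : IsUnit c) (hd : IsUnit d) (h : ∀ t, exq a b t = exq c d t) :
    ({a, -a, b, -b} : Multiset (ZMod p)) = {c, -c, d, -d} := by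
  have memR : ∀ t, (c = t ∨ -c = t ∨ d = t ∨ -d = t) →
      (a = t ∨ -a = t ∨ b = t ∨ -b = t) := fun t ht =>
    exq_mem t ((h t) ▸ exq_neg hp hc hd t ht)
  have memL : ∀ t, (a = t ∨ -a = t ∨ b = t ∨ -b = t) →
      (c = t ∨ -c = t ∨ d = t ∨ -d = t) := fun t ht =>
    exq_mem t ((h t).symm ▸ exq_neg hp ha hb t ht)
  by_cases hba : b = a ∨ b = -a
  · have hca : c = a ∨ c = -a := by
      rcases memR c (Or.inl rfl) with h1 | h1 | h1 | h1
      · exact Or.inl h1.symm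
      · exact Or.inr (by linear_combination -h1)
      · rcases hba with h2 | h2
        · exact Or.inl (by linear_combination h2 - h1)
        · exact Or.inr (by linear_combination -h1 + h2)
      · rcases hba with h2 | h2
        · exact Or.inr (by linear_combination -h1 - h2)
        · exact Or.inl (by linear_combination -h1 - h2)
    by_cases hdc : d = c ∨ d = -c
    · -- both degenerate
      have lhs_eq : ({a, -a, b, -b} : Multiset (ZMod p)) = {a, -a, a, -a} := by
        rcases hba with rfl | rfl
        · rfl
        · rw [neg_neg]; exact multiset_inner_swap a (-a) (-a) a
      have rhs_eq : ({c, -c, d, -d} : Multiset (ZMod p)) = {c, -c, c, -c} := by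
        rcases hdc with rfl | rfl
        · rfl
        · rw [neg_neg]; exact multiset_inner_swap c (-c) (-c) c
      rw [lhs_eq, rhs_eq]
      rcases hca with rfl | rfl
      · rfl
      · rw [neg_neg]; exact multiset_perm_helper a (-a)
    · -- RHS nondegenerate, LHS degenerate : contradiction
      push_neg at hdc
      have hda : d = a ∨ d = -a := by
        rcases memR d (Or.inr (Or.inr (Or.inl rfl))) with h1 | h1 | h1 | h1
        · exact Or.inl h1.symm
        · exact Or.inr (by linear_combination -h1)
        · rcases hba with h2 | h2
          · exact Or.inl (by linear_combination h2 - h1)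
          · exact Or.inr (by linear_combination -h1 + h2)
        · rcases hba with h2 | h2
          · exact Or.inr (by linear_combination -h1 - h2)
          · exact Or.inl (by linear_combination -h1 - h2)
      exfalso
      rcases hca with h1 | h1 <;> rcases hda with h2 | h2
      · exact hdc.1 (by linear_combination h2 - h1)
      · exact hdc.2 (by linear_combination h2 + h1)
      · exact hdc.2 (by linear_combination h2 + h1)
      · exact hdc.1 (by linear_combination h2 - h1)
  · by_cases hdc : d = c ∨ d = -c
    · -- LHS nondegenerate, RHS degenerate : contradiction
      push_neg at hba
      have hac : a = c ∨ a = -c := by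
        rcases memL a (Or.inl rfl) with h1 | h1 | h1 | h1
        · exact Or.inl h1.symm
        · exact Or.inr (by linear_combination -h1)
        · rcases hdc with h2 | h2
          · exact Or.inl (by linear_combination h2 - h1)
          · exact Or.inr (by linear_combination -h1 + h2)
        · rcases hdc with h2 | h2
          · exact Or.inr (by linear_combination -h1 - h2)
          · exact Or.inl (by linear_combination -h1 - h2)
      have hbc : b = c ∨ b = -c := by
        rcases memL b (Or.inr (Or.inr (Or.inl rfl))) with h1 | h1 | h1 | h1
        · exact Or.inl h1.symm
        · exact Or.inr (by linear_combination -h1)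
        · rcases hdc with h2 | h2
          · exact Or.inl (by linear_combination h2 - h1)
          · exact Or.inr (by linear_combination -h1 + h2)
        · rcases hdc with h2 | h2
          · exact Or.inr (by linear_combination -h1 - h2)
          · exact Or.inl (by linear_combination -h1 - h2)
      exfalso
      rcases hac with h1 | h1 <;> rcases hbc with h2 | h2
      · exact hba.1 (by linear_combination h2 - h1)
      · exact hba.2 (by linear_combination h2 + h1)
      · exact hba.2 (by linear_combination h2 + h1)
      · exact hba.1 (by linear_combination h2 - h1)
    · -- both nondegenerate
      push_neg at hba
      push_neg at hdc
      have hana : a ≠ -a := unit_ne_neg_self hp ha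
      have hbnb : b ≠ -b := unit_ne_neg_self hp hb
      have nodupL : ({a, -a, b, -b} : Multiset (ZMod p)).Nodup := by
        simp only [Multiset.insert_eq_cons, Multiset.nodup_cons, Multiset.mem_cons,
          Multiset.mem_singleton, Multiset.nodup_singleton, and_true]
        refine ⟨?_, ?_, ?_⟩
        · push_neg
          exact ⟨hana, fun hab => hba.1 hab.symm, fun hab => hba.2 (by linear_combination hab)⟩
        · push_neg
          exact ⟨fun hab => hba.2 hab.symm, fun hab => hba.1 (by linear_combination hab)⟩
        · exact hbnb
      have subsetL : ({a, -a, b, -b} : Multiset (ZMod p)) ⊆ {c, -c, d, -d} := by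
        intro x hx
        simp only [Multiset.insert_eq_cons, Multiset.mem_cons, Multiset.mem_singleton] at hx ⊢
        have : c = x ∨ -c = x ∨ d = x ∨ -d = x := by
          rcases hx with rfl | rfl | rfl | rfl
          · exact memL x (Or.inl rfl)
          · exact memL _ (Or.inr (Or.inl rfl))
          · exact memL _ (Or.inr (Or.inr (Or.inl rfl)))
          · exact memL _ (Or.inr (Or.inr (Or.inr rfl)))
        tauto
      refine Multiset.eq_of_le_of_card_le ((Multiset.le_iff_subset nodupL).2 subsetL) ?_
      simp [Multiset.insert_eq_cons]

noncomputable def V (x : ZMod p) : AddMonoidAlgebra ℚ (ZMod p) :=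
  AddMonoidAlgebra.single x 1

lemma V_mul (x y : ZMod p) : V x * V y = AddMonoidAlgebra.single (x + y) (1:ℚ) := by
  rw [V, V, AddMonoidAlgebra.single_mul_single, mul_one]

lemma expandV (x y : ZMod p) :
    (1 - V x) * (1 - V (-x)) * (1 - V y) * (1 - V (-y)) =
      AddMonoidAlgebra.single (0 : ZMod p) (4:ℚ)
      - AddMonoidAlgebra.single x (2:ℚ) - AddMonoidAlgebra.single (-x) (2:ℚ)
      - AddMonoidAlgebra.single y (2:ℚ) - AddMonoidAlgebra.single (-y) (2:ℚ)
      + AddMonoidAlgebra.single (x + y) (1:ℚ) + AddMonoidAlgebra.single (x - y) (1:ℚ)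
      + AddMonoidAlgebra.single (y - x) (1:ℚ) + AddMonoidAlgebra.single (-x - y) (1:ℚ) := by
  have r1 : V x * V (-x) = 1 := by
    rw [V_mul, add_neg_cancel]; exact AddMonoidAlgebra.one_def.symm
  have r2 : V y * V (-y) = 1 := by
    rw [V_mul, add_neg_cancel]; exact AddMonoidAlgebra.one_def.symm
  have r3 : V x * V y = AddMonoidAlgebra.single (x + y) (1:ℚ) := V_mul x y
  have r4 : V x * V (-y) = AddMonoidAlgebra.single (x - y) (1:ℚ) := by
    rw [V_mul, ← sub_eq_add_neg]
  have r5 : V (-x) * V y = AddMonoidAlgebra.single (y - x) (1:ℚ) := by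
    rw [V_mul, neg_add_eq_sub]
  have r6 : V (-x) * V (-y) = AddMonoidAlgebra.single (-x - y) (1:ℚ) := by
    rw [V_mul, ← sub_eq_add_neg]
  have h4 : (4 : AddMonoidAlgebra ℚ (ZMod p)) = AddMonoidAlgebra.single (0 : ZMod p) (4:ℚ) := by
    rw [show (4 : AddMonoidAlgebra ℚ (ZMod p)) = ((4:ℕ) : AddMonoidAlgebra ℚ (ZMod p)) by norm_num,
      AddMonoidAlgebra.natCast_def]
    norm_num
  have hTx : AddMonoidAlgebra.single x (2:ℚ) = V x + V x := by
    rw [V, ← AddMonoidAlgebra.single_add]; norm_num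
  have hTnx : AddMonoidAlgebra.single (-x) (2:ℚ) = V (-x) + V (-x) := by
    rw [V, ← AddMonoidAlgebra.single_add]; norm_num
  have hTy : AddMonoidAlgebra.single y (2:ℚ) = V y + V y := by
    rw [V, ← AddMonoidAlgebra.single_add]; norm_num
  have hTny : AddMonoidAlgebra.single (-y) (2:ℚ) = V (-y) + V (-y) := by
    rw [V, ← AddMonoidAlgebra.single_add]; norm_num
  have step1 : (1 - V x) * (1 - V (-x)) = 2 - V x - V (-x) := by linear_combination r1
  have step2 : (1 - V y) * (1 - V (-y)) = 2 - V y - V (-y) := by linear_combination r2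
  calc (1 - V x) * (1 - V (-x)) * (1 - V y) * (1 - V (-y))
      = ((1 - V x) * (1 - V (-x))) * ((1 - V y) * (1 - V (-y))) := by ring
    _ = (2 - V x - V (-x)) * (2 - V y - V (-y)) := by rw [step1, step2]
    _ = _ := by linear_combination r3 + r4 + r5 + r6 + h4 + hTx + hTnx + hTy + hTny

lemma coeff_bridge (x y z w : ZMod p)
    (h : (1 - V x) * (1 - V (-x)) * (1 - V y) * (1 - V (-y)) =
         (1 - V z) * (1 - V (-z)) * (1 - V w) * (1 - V (-w))) :
    ∀ t, exq x y t = exq z w t := by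
  intro t
  rw [expandV, expandV] at h
  have h2 := congrArg (fun f : AddMonoidAlgebra ℚ (ZMod p) => f.coeff t) h
  have h3 : (Finsupp.single (0 : ZMod p) (4:ℚ)
      - Finsupp.single x 2 - Finsupp.single (-x) 2 - Finsupp.single y 2 - Finsupp.single (-y) 2
      + Finsupp.single (x+y) 1 + Finsupp.single (x-y) 1 + Finsupp.single (y-x) 1
      + Finsupp.single (-x-y) 1 : (ZMod p) →₀ ℚ) t
      = (Finsupp.single (0 : ZMod p) (4:ℚ)
      - Finsupp.single z 2 - Finsupp.single (-z) 2 - Finsupp.single w 2 - Finsupp.single (-w) 2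
      + Finsupp.single (z+w) 1 + Finsupp.single (z-w) 1 + Finsupp.single (w-z) 1
      + Finsupp.single (-z-w) 1 : (ZMod p) →₀ ℚ) t := h2
  simp only [Finsupp.sub_apply, Finsupp.add_apply, Finsupp.single_apply] at h3
  unfold exq
  exact h3

lemma coprime_isUnit {p : ℕ} {m : ℤ} (h : IsCoprime m (p:ℤ)) : IsUnit ((m : ZMod p)) := by
  obtain ⟨u, v, huv⟩ := h
  have h2 : (u : ZMod p) * (m : ZMod p) = 1 := by
    have h3 := congrArg (fun z : ℤ => ((z : ZMod p))) huv
    push_cast at h3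
    simpa [ZMod.natCast_self] using h3
  exact IsUnit.of_mul_eq_one _ (by rw [mul_comm]; exact h2)


/-- if for every `p`-th root of unity `ζ ≠ 1`,
`(1−ζ^q)(1−ζ)(1−ζ^{−q})(1−ζ^{−1}) = (1−ζ^{cq′})(1−ζ^c)(1−ζ^{−cq′})(1−ζ^{−c})`,
then the multisets `{1, −1, q, −q}` and `{c, −c, cq′, −cq′}` agree in `ZMod p`. -/
theorem statement11 (p : ℕ) (hp : 1 ≤ p) (q q' c : ℤ)
    (hq : IsCoprime q (p : ℤ)) (hq' : IsCoprime q' (p : ℤ)) (hc : IsCoprime c (p : ℤ))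
    (h : ∀ ζ : ℂ, ζ ^ p = 1 → ζ ≠ 1 →
      (1 - ζ ^ q) * (1 - ζ) * (1 - ζ ^ (-q)) * (1 - ζ⁻¹)
        = (1 - ζ ^ (c * q')) * (1 - ζ ^ c) * (1 - ζ ^ (-(c * q'))) * (1 - ζ ^ (-c))) :
    ({1, -1, ((q : ZMod p)), -((q : ZMod p))} : Multiset (ZMod p))
      = {((c : ZMod p)), -((c : ZMod p)), (((c * q' : ℤ) : ZMod p)), -(((c * q' : ℤ) : ZMod p))} := by
  rcases Nat.lt_or_ge p 3 with hp3 | hp3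
  · interval_cases p
    · -- p = 1
      have h0 : ∀ x : ZMod 1, x = 0 := fun x => Subsingleton.elim x 0
      simp only [Multiset.insert_eq_cons]
      congr 1
      · exact Subsingleton.elim _ _
      congr 1
      · exact Subsingleton.elim _ _
      congr 1
      · exact Subsingleton.elim _ _
      exact congrArg _ (Subsingleton.elim _ _)
    · -- p = 2
      have h0 : ∀ x : ZMod 2, x ≠ 0 → x = 1 := by decide
      have h2u : ¬ IsUnit (2:ℤ) := by
        intro hu2
        rcases Int.isUnit_iff.mp hu2 with h' | h' <;> norm_num at h'
      have hq2 : (q : ZMod 2) = 1 := h0 _ (by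
        rw [Ne, ZMod.intCast_zmod_eq_zero_iff_dvd]
        intro hdvd
        exact h2u (hq.isUnit_of_dvd' hdvd dvd_rfl))
      have hc2 : (c : ZMod 2) = 1 := h0 _ (by
        rw [Ne, ZMod.intCast_zmod_eq_zero_iff_dvd]
        intro hdvd
        exact h2u (hc.isUnit_of_dvd' hdvd dvd_rfl))
      have hcq2 : ((c * q' : ℤ) : ZMod 2) = 1 := h0 _ (by
        rw [Ne, ZMod.intCast_zmod_eq_zero_iff_dvd]
        intro hdvd
        exact h2u ((hc.mul_left hq').isUnit_of_dvd' hdvd dvd_rfl))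
      rw [hq2, hc2, hcq2]
  · haveI : NeZero p := ⟨by omega⟩
    have hp0 : 0 < p := by omega
    -- zpow reduction
    have hzpow : ∀ (ζ : ℂ), ζ ^ p = 1 → ∀ m : ℤ, ζ ^ m = ζ ^ (((m : ZMod p)).val) := by
      intro ζ hζ m
      have hζ0 : ζ ≠ 0 := by
        intro h0
        rw [h0, zero_pow (by omega : p ≠ 0)] at hζ
        exact zero_ne_one hζ
      have hzp : ζ ^ (p:ℤ) = 1 := by rw [zpow_natCast, hζ]
      have hval : (((m : ZMod p)).val : ℤ) = m % p := ZMod.val_intCast m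
      calc ζ ^ m = ζ ^ ((p:ℤ) * (m / p) + m % p) := by rw [Int.mul_ediv_add_emod]
        _ = (ζ ^ (p:ℤ)) ^ (m / p) * ζ ^ (m % p) := by rw [zpow_add₀ hζ0, zpow_mul]
        _ = ζ ^ (m % p) := by rw [hzp, one_zpow, one_mul]
        _ = ζ ^ ((((m : ZMod p)).val : ℤ)) := by rw [hval]
        _ = _ := zpow_natCast ζ _
    set f := algebraMap ℚ ℂ with hf
    set P : Polynomial ℚ :=
      (1 - Polynomial.X ^ ((q : ZMod p)).val) * (1 - Polynomial.X ^ (((1:ℤ) : ZMod p)).val) *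
      (1 - Polynomial.X ^ (((-q : ℤ) : ZMod p)).val) * (1 - Polynomial.X ^ (((-1:ℤ) : ZMod p)).val)
      with hP
    set Q : Polynomial ℚ :=
      (1 - Polynomial.X ^ (((c * q' : ℤ) : ZMod p)).val) * (1 - Polynomial.X ^ ((c : ZMod p)).val) *
      (1 - Polynomial.X ^ (((-(c * q') : ℤ) : ZMod p)).val) * (1 - Polynomial.X ^ (((-c : ℤ) : ZMod p)).val)
      with hQ
    have hroots : ∀ ζ : ℂ, ζ ^ p = 1 →
        Polynomial.eval ζ (P.map f) = Polynomial.eval ζ (Q.map f) := by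
      intro ζ hζ
      rw [hP, hQ]
      simp only [Polynomial.map_mul, Polynomial.map_sub, Polynomial.map_pow, Polynomial.map_one,
        Polynomial.map_X, Polynomial.eval_mul, Polynomial.eval_sub, Polynomial.eval_pow,
        Polynomial.eval_one, Polynomial.eval_X]
      by_cases h1 : ζ = 1
      · simp [h1]
      · have e1 : ζ ^ ((q : ZMod p)).val = ζ ^ q := (hzpow ζ hζ q).symm
        have e2 : ζ ^ (((1:ℤ) : ZMod p)).val = ζ := (hzpow ζ hζ 1).symm.trans (zpow_one ζ)
        have e3 : ζ ^ (((-q : ℤ) : ZMod p)).val = ζ ^ (-q) := (hzpow ζ hζ (-q)).symm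
        have e4 : ζ ^ (((-1:ℤ) : ZMod p)).val = ζ⁻¹ :=
          (hzpow ζ hζ (-1)).symm.trans (by rw [zpow_neg, zpow_one])
        have f1 : ζ ^ (((c * q' : ℤ) : ZMod p)).val = ζ ^ (c * q') := (hzpow ζ hζ (c * q')).symm
        have f2 : ζ ^ ((c : ZMod p)).val = ζ ^ c := (hzpow ζ hζ c).symm
        have f3 : ζ ^ (((-(c * q') : ℤ) : ZMod p)).val = ζ ^ (-(c * q')) :=
          (hzpow ζ hζ (-(c * q'))).symm
        have f4 : ζ ^ (((-c : ℤ) : ZMod p)).val = ζ ^ (-c) := (hzpow ζ hζ (-c)).symm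
        rw [e1, e2, e3, e4, f1, f2, f3, f4]
        exact h ζ hζ h1
    have hdvd : (Polynomial.X ^ p - 1 : Polynomial ℂ) ∣ (P - Q).map f := by
      have hprim := Complex.isPrimitiveRoot_exp p (by omega)
      rw [Polynomial.X_pow_sub_one_eq_prod hp0 hprim]
      apply Finset.prod_dvd_of_coprime
      · exact (Polynomial.pairwise_coprime_X_sub_C Function.injective_id).set_pairwise _
      · intro ζ hζ
        rw [Polynomial.dvd_iff_isRoot]
        have hζ1 : ζ ^ p = 1 := (Polynomial.mem_nthRootsFinset hp0 1).1 hζ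
        rw [Polynomial.IsRoot, Polynomial.map_sub, Polynomial.eval_sub, hroots ζ hζ1, sub_self]
    have hmapXp : (Polynomial.X ^ p - 1 : Polynomial ℚ).map f = Polynomial.X ^ p - 1 := by
      simp [Polynomial.map_sub, Polynomial.map_pow, Polynomial.map_one, Polynomial.map_X]
    have hdvdQ : (Polynomial.X ^ p - 1 : Polynomial ℚ) ∣ P - Q := by
      rw [← Polynomial.map_dvd_map' f, hmapXp]
      exact hdvd
    obtain ⟨k, hk⟩ := hdvdQ
    set u : AddMonoidAlgebra ℚ (ZMod p) := AddMonoidAlgebra.single (1 : ZMod p) (1:ℚ) with hu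
    have hup : ∀ n : ℕ, u ^ n = AddMonoidAlgebra.single ((n : ZMod p)) (1:ℚ) := by
      intro n
      rw [hu, AddMonoidAlgebra.single_pow, one_pow, nsmul_eq_mul, mul_one]
    have hu0 : u ^ p = 1 := by
      rw [hup, ZMod.natCast_self]
      exact AddMonoidAlgebra.one_def.symm
    have hPQ : Polynomial.aeval u P = Polynomial.aeval u Q := by
      have h5 := congrArg (Polynomial.aeval u) hk
      simp only [map_sub, map_mul, map_pow, map_one, Polynomial.aeval_X] at h5
      rw [hu0, sub_self, zero_mul, sub_eq_zero] at h5
      exact h5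
    have hval : ∀ m : ℤ, u ^ ((m : ZMod p)).val = V ((m : ZMod p)) := by
      intro m
      rw [hup, ZMod.natCast_val, ZMod.cast_id]
      rfl
    rw [hP, hQ] at hPQ
    simp only [map_mul, map_sub, map_one, map_pow, Polynomial.aeval_X] at hPQ
    rw [hval q, hval 1, hval (-q), hval (-1), hval (c * q'), hval c, hval (-(c * q')),
      hval (-c)] at hPQ
    simp only [Int.cast_neg, Int.cast_one] at hPQ
    have hco := coeff_bridge 1 ((q : ZMod p)) ((c : ZMod p)) (((c * q' : ℤ) : ZMod p))
      (by linear_combination hPQ)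
    exact key_s11 hp3 isUnit_one (coprime_isUnit hq) (coprime_isUnit hc)
      (coprime_isUnit (hc.mul_left hq')) hco
end

section
/- Let p > 1 be an integer, let q and q′ be integers with 0 < q < p and 0 < q′ < p, both coprime to p, and let c be an integer coprime to p. Suppose that for every integer k not divisible by p, (−1)^k · exp(π·I·k²·q/p) · sin(π·c·k·q′/p) · sin(π·c·k/p) = (−1)^{c·k} · exp(π·I·c²·k²·q′/p) · sin(π·k·q/p) · sin(π·k/p) (an identity of complex numbers; all four sines are nonzero since p ∤ k and q, q′, c are coprime to p). Then q ≡ q′ (mod p) or q·q′ ≡ 1 (mod p). (This is the number-theoretic heart of the paper's proposition that the non-semi-simple sl(2) quantum invariants at r = 2 — equivalently the canonically normalized Reidemeister torsion — classify lens spaces: Z₂(L(p,q),ω) takes the values (−1)^k e^{iπk²q/p}/(4i·sin(πkq/p)·sin(πk/p)), and L(p,q) ≅ L(p,q′) preserving orientation iff q ≡ q′ or qq′ ≡ 1 mod p.) -/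
/-- if the `r = 2` lens-space invariant identity
`(−1)^k e^{iπk²q/p} sin(πckq′/p) sin(πck/p) = (−1)^{ck} e^{iπc²k²q′/p} sin(πkq/p) sin(πk/p)`
holds for every integer `k` not divisible by `p`, then `q ≡ q′ (mod p)` or
`q·q′ ≡ 1 (mod p)`. -/
theorem statement12 (p q q' c : ℤ) (hp : 1 < p)
    (hq0 : 0 < q) (hqp : q < p) (hq'0 : 0 < q') (hq'p : q' < p)
    (hq : IsCoprime q p) (hq' : IsCoprime q' p) (hc : IsCoprime c p)
    (h : ∀ k : ℤ, ¬ p ∣ k →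
      (-1 : ℂ) ^ k * Complex.exp (Real.pi * Complex.I * (k : ℂ) ^ 2 * (q : ℂ) / (p : ℂ)) *
          ((Real.sin (Real.pi * (c : ℝ) * (k : ℝ) * (q' : ℝ) / (p : ℝ)) : ℂ)) *
          ((Real.sin (Real.pi * (c : ℝ) * (k : ℝ) / (p : ℝ)) : ℂ))
        = (-1 : ℂ) ^ (c * k) *
            Complex.exp (Real.pi * Complex.I * (c : ℂ) ^ 2 * (k : ℂ) ^ 2 * (q' : ℂ) / (p : ℂ)) *
            ((Real.sin (Real.pi * (k : ℝ) * (q : ℝ) / (p : ℝ)) : ℂ)) *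
            ((Real.sin (Real.pi * (k : ℝ) / (p : ℝ)) : ℂ))) :
    q ≡ q' [ZMOD p] ∨ q * q' ≡ 1 [ZMOD p] := by
  classical
  have hpC : (p:ℂ) ≠ 0 := by exact_mod_cast (by omega : p ≠ 0)
  have hpR : (p:ℝ) ≠ 0 := by exact_mod_cast (by omega : p ≠ 0)
  -- coprimality gives non-divisibility
  have hndvd : ∀ x : ℤ, IsCoprime x p → ¬ p ∣ x := by
    intro x hx hdvd
    obtain ⟨u, v, huv⟩ := hx
    obtain ⟨t, ht⟩ := hdvd
    have h1 : p ∣ 1 := ⟨u*t + v, by rw [ht] at huv; linear_combination huv.symm⟩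
    have := Int.le_of_dvd one_pos h1
    omega
  -- the basic root of unity
  set ζ : ℂ := Complex.exp (Real.pi * Complex.I / p) with hζdef
  have hζ : ζ ≠ 0 := Complex.exp_ne_zero _
  have hzpow : ∀ x : ℤ, ζ ^ x = Complex.exp ((Real.pi : ℂ) * Complex.I * (x : ℂ) / p) := by
    intro x
    rw [hζdef, ← Complex.exp_int_mul]
    congr 1
    ring
  have h2p : ζ ^ (2*p) = 1 := by
    rw [hzpow, show (Real.pi : ℂ) * Complex.I * ((2*p : ℤ) : ℂ) / p = 2*Real.pi*Complex.I by
      push_cast; field_simp]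
    exact Complex.exp_two_pi_mul_I
  have hζp : ζ ^ (p : ℤ) = -1 := by
    rw [hzpow, show (Real.pi : ℂ) * Complex.I * ((p : ℤ) : ℂ) / p = Real.pi*Complex.I by
      field_simp]
    exact Complex.exp_pi_mul_I
  have hneg1 : ∀ t : ℤ, ζ ^ (p*t) = (-1 : ℂ) ^ t := by
    intro t
    rw [zpow_mul, hζp]
  have hnegneg : ∀ t : ℤ, (-1 : ℂ) ^ (-t) = (-1 : ℂ) ^ t := by
    intro t
    rw [zpow_neg, ← inv_zpow, inv_neg, inv_one]
  have hzeta_eq : ∀ x y : ℤ, (2*p) ∣ x - y → ζ ^ x = ζ ^ y := by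
    intro x y hxy
    obtain ⟨t, ht⟩ := hxy
    rw [show x = y + (2*p)*t by linarith, zpow_add₀ hζ, zpow_mul, h2p, one_zpow, mul_one]
  have hsin : ∀ x : ℤ, ((Real.sin (Real.pi * (x : ℝ) / (p : ℝ)) : ℝ) : ℂ)
      = (ζ ^ (-x) - ζ ^ x) * Complex.I / 2 := by
    intro x
    have h2 := Complex.two_sin ((Real.pi * (x : ℝ) / (p : ℝ) : ℝ) : ℂ)
    rw [show -(((Real.pi * (x:ℝ) / (p:ℝ) : ℝ)) : ℂ) * Complex.I
          = (Real.pi : ℂ) * Complex.I * ((-x : ℤ) : ℂ) / p by push_cast; ring,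
        show (((Real.pi * (x:ℝ) / (p:ℝ) : ℝ)) : ℂ) * Complex.I
          = (Real.pi : ℂ) * Complex.I * ((x : ℤ) : ℂ) / p by push_cast; ring,
        ← hzpow, ← hzpow] at h2
    rw [Complex.ofReal_sin]
    linear_combination h2 / 2
  have hsin_ne : ∀ x : ℤ, ¬ p ∣ x → Real.sin (Real.pi * (x : ℝ) / (p : ℝ)) ≠ 0 := by
    intro x hx hs
    rw [Real.sin_eq_zero_iff] at hs
    obtain ⟨n, hn⟩ := hs
    have h7 : Real.pi * (n : ℝ) = Real.pi * ((x : ℝ) / (p : ℝ)) := by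
      rw [mul_comm Real.pi]
      rw [hn]; ring
    have h8 := mul_left_cancel₀ Real.pi_ne_zero h7
    rw [eq_div_iff hpR] at h8
    exact hx ⟨n, by rw [mul_comm]; exact_mod_cast h8.symm⟩
  ------------------------------------------------------------------
  -- Step A : from k = 1 obtain q ≡ c² q' (mod p)
  ------------------------------------------------------------------
  obtain ⟨m, hm⟩ : ∃ m : ℤ, q - c^2*q' = p * m := by
    have h1 := h 1 (by intro hd; have := Int.le_of_dvd one_pos hd; omega)
    rw [show Real.pi * (c:ℝ) * ((1:ℤ):ℝ) * (q':ℝ) / (p:ℝ)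
          = Real.pi * ((c*q' : ℤ) : ℝ) / (p:ℝ) by push_cast; ring,
        show Real.pi * (c:ℝ) * ((1:ℤ):ℝ) / (p:ℝ)
          = Real.pi * ((c : ℤ) : ℝ) / (p:ℝ) by push_cast; ring,
        show Real.pi * ((1:ℤ):ℝ) * (q:ℝ) / (p:ℝ)
          = Real.pi * ((q : ℤ) : ℝ) / (p:ℝ) by push_cast; ring,
        show (Real.pi : ℂ) * Complex.I * ((1:ℤ):ℂ)^2 * (q:ℂ) / (p:ℂ)
          = (Real.pi : ℂ) * Complex.I * ((q : ℤ) : ℂ) / p by push_cast; ring,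
        show (Real.pi : ℂ) * Complex.I * (c:ℂ)^2 * ((1:ℤ):ℂ)^2 * (q':ℂ) / (p:ℂ)
          = (Real.pi : ℂ) * Complex.I * ((c^2*q' : ℤ) : ℂ) / p by push_cast; ring,
        ← hzpow q, ← hzpow (c^2*q'), ← hneg1 1, ← hneg1 (c*1)] at h1
    -- h1 : ζ^(p*1) * ζ^q * ↑s₁ * ↑s₂ = ζ^(p*(c*1)) * ζ^(c^2*q') * ↑s₃ * ↑s₄
    have hzsplit : ζ ^ (p*1 + q - (p*(c*1) + c^2*q')) * (ζ ^ (p*(c*1)) * ζ ^ (c^2*q'))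
        = ζ ^ (p*1) * ζ ^ q := by
      rw [← zpow_add₀ hζ (p*(c*1)) (c^2*q'),
          ← zpow_add₀ hζ (p*1 + q - (p*(c*1) + c^2*q')) (p*(c*1) + c^2*q'),
          ← zpow_add₀ hζ (p*1) q]
      congr 1
      ring
    have key1 : ζ ^ (p*1 + q - (p*(c*1) + c^2*q'))
          * ((Real.sin (Real.pi * ((c*q' : ℤ) : ℝ) / (p:ℝ))
              * Real.sin (Real.pi * ((c : ℤ) : ℝ) / (p:ℝ)) : ℝ) : ℂ)
        = ((Real.sin (Real.pi * ((q : ℤ) : ℝ) / (p:ℝ))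
              * Real.sin (Real.pi * ((1 : ℤ) : ℝ) / (p:ℝ)) : ℝ) : ℂ) := by
      apply mul_right_cancel₀ (mul_ne_zero (zpow_ne_zero _ hζ) (zpow_ne_zero _ hζ)
        : ζ ^ (p*(c*1)) * ζ ^ (c^2*q') ≠ 0)
      rw [Complex.ofReal_mul, Complex.ofReal_mul]
      linear_combination h1 + ((Real.sin (Real.pi * ((c*q' : ℤ) : ℝ) / (p:ℝ)) : ℂ)
        * (Real.sin (Real.pi * ((c : ℤ) : ℝ) / (p:ℝ)) : ℂ)) * hzsplit
    rw [show ζ ^ (p*1 + q - (p*(c*1) + c^2*q'))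
        = Complex.exp (((Real.pi * (((p*1 + q - (p*(c*1) + c^2*q') : ℤ)) : ℝ) / (p:ℝ) : ℝ))
            * Complex.I) by rw [hzpow]; congr 1; push_cast; ring] at key1
    have him := congrArg Complex.im key1
    simp only [Complex.mul_im, Complex.exp_ofReal_mul_I_im, Complex.exp_ofReal_mul_I_re,
      Complex.ofReal_im, Complex.ofReal_re, mul_zero, zero_add, add_zero] at him
    have hsmul_ne : Real.sin (Real.pi * ((c*q' : ℤ) : ℝ) / (p:ℝ))
        * Real.sin (Real.pi * ((c : ℤ) : ℝ) / (p:ℝ)) ≠ 0 :=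
      mul_ne_zero (hsin_ne (c*q') (hndvd _ (hc.mul_left hq'))) (hsin_ne c (hndvd _ hc))
    have hsz : Real.sin (Real.pi * (((p*1 + q - (p*(c*1) + c^2*q') : ℤ)) : ℝ) / (p:ℝ)) = 0 := by
      rcases mul_eq_zero.mp him with h' | h'
      · exact h'
      · exact absurd h' hsmul_ne
    rw [Real.sin_eq_zero_iff] at hsz
    obtain ⟨n, hn⟩ := hsz
    have h7 : Real.pi * (n : ℝ)
        = Real.pi * ((((p*1 + q - (p*(c*1) + c^2*q') : ℤ)) : ℝ) / (p : ℝ)) := by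
      rw [mul_comm Real.pi]
      rw [hn]; ring
    have h8 := mul_left_cancel₀ Real.pi_ne_zero h7
    rw [eq_div_iff hpR] at h8
    have hInt : n * p = p*1 + q - (p*(c*1) + c^2*q') := by exact_mod_cast h8
    exact ⟨n - 1 + c, by linear_combination -hInt⟩
  ------------------------------------------------------------------
  -- the 8-term character identity, for every integer k
  ------------------------------------------------------------------
  have claim : ∀ k : ℤ,
      ζ ^ ((p*(1+m) + c*(q'+1))*k) + ζ ^ ((p*(1+m) - c*(q'+1))*k)
      - ζ ^ ((p*(1+m) + c*(q'-1))*k) - ζ ^ ((p*(1+m) - c*(q'-1))*k)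
      - ζ ^ ((p*c + (q+1))*k) - ζ ^ ((p*c - (q+1))*k)
      + ζ ^ ((p*c + (q-1))*k) + ζ ^ ((p*c - (q-1))*k) = 0 := by
    intro k
    have hfac : ζ ^ (p*((1+m)*k)) * (ζ ^ (-(c*k*q')) - ζ ^ (c*k*q'))
          * (ζ ^ (-(c*k)) - ζ ^ (c*k))
        = ζ ^ (p*(c*k)) * (ζ ^ (-(k*q)) - ζ ^ (k*q)) * (ζ ^ (-k) - ζ ^ k) := by
      by_cases hk : p ∣ k
      · obtain ⟨t, rfl⟩ := hk
        have hz1 : ζ ^ (-(c*(p*t))) - ζ ^ (c*(p*t)) = 0 := by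
          rw [show -(c*(p*t)) = p*(-(c*t)) by ring, show c*(p*t) = p*(c*t) by ring,
            hneg1, hneg1, hnegneg, sub_self]
        have hz2 : ζ ^ (-(p*t)) - ζ ^ (p*t) = 0 := by
          rw [show -(p*t) = p*(-t) by ring, hneg1, hneg1, hnegneg, sub_self]
        rw [hz1, hz2, mul_zero, mul_zero]
      · have h0 := h k hk
        rw [show Real.pi * (c:ℝ) * (k:ℝ) * (q':ℝ) / (p:ℝ)
              = Real.pi * ((c*k*q' : ℤ) : ℝ) / (p:ℝ) by push_cast; ring,
            show Real.pi * (c:ℝ) * (k:ℝ) / (p:ℝ)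
              = Real.pi * ((c*k : ℤ) : ℝ) / (p:ℝ) by push_cast; ring,
            show Real.pi * (k:ℝ) * (q:ℝ) / (p:ℝ)
              = Real.pi * ((k*q : ℤ) : ℝ) / (p:ℝ) by push_cast; ring,
            hsin (c*k*q'), hsin (c*k), hsin (k*q), hsin k,
            show (Real.pi : ℂ) * Complex.I * (k:ℂ)^2 * (q:ℂ) / (p:ℂ)
              = (Real.pi : ℂ) * Complex.I * ((k^2*q : ℤ) : ℂ) / p by push_cast; ring,
            show (Real.pi : ℂ) * Complex.I * (c:ℂ)^2 * (k:ℂ)^2 * (q':ℂ) / (p:ℂ)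
              = (Real.pi : ℂ) * Complex.I * ((c^2*k^2*q' : ℤ) : ℂ) / p by push_cast; ring,
            ← hzpow (k^2*q), ← hzpow (c^2*k^2*q'), ← hneg1 k, ← hneg1 (c*k)] at h0
        -- combine the two leading powers on the left
        obtain ⟨j, hj⟩ := Int.even_mul_succ_self (k-1)
        have hdiff : (2*p) ∣ (p*k + k^2*q) - (p*((1+m)*k) + c^2*k^2*q') :=
          ⟨m*j, by linear_combination k^2*hm + p*m*hj⟩
        rw [← zpow_add₀ hζ (p*k) (k^2*q), hzeta_eq _ _ hdiff,
          zpow_add₀ hζ (p*((1+m)*k)) (c^2*k^2*q')] at h0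
        apply mul_right_cancel₀ (zpow_ne_zero (c^2*k^2*q') hζ)
        linear_combination (-4 : ℂ) * h0
          + (ζ ^ (p*((1+m)*k)) * ζ ^ (c^2*k^2*q')
              * (ζ ^ (-(c*k*q')) - ζ ^ (c*k*q')) * (ζ ^ (-(c*k)) - ζ ^ (c*k))
            - ζ ^ (p*(c*k)) * ζ ^ (c^2*k^2*q')
              * (ζ ^ (-(k*q)) - ζ ^ (k*q)) * (ζ ^ (-k) - ζ ^ k)) * Complex.I_sq
    rw [show (p*(1+m) + c*(q'+1))*k = p*((1+m)*k) + (c*k*q' + c*k) by ring,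
        show (p*(1+m) - c*(q'+1))*k = p*((1+m)*k) + (-(c*k*q') + -(c*k)) by ring,
        show (p*(1+m) + c*(q'-1))*k = p*((1+m)*k) + (c*k*q' + -(c*k)) by ring,
        show (p*(1+m) - c*(q'-1))*k = p*((1+m)*k) + (-(c*k*q') + c*k) by ring,
        show (p*c + (q+1))*k = p*(c*k) + (k*q + k) by ring,
        show (p*c - (q+1))*k = p*(c*k) + (-(k*q) + -k) by ring,
        show (p*c + (q-1))*k = p*(c*k) + (k*q + -k) by ring,
        show (p*c - (q-1))*k = p*(c*k) + (-(k*q) + k) by ring]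
    simp only [zpow_add₀ hζ]
    linear_combination hfac
  ------------------------------------------------------------------
  -- orthogonality
  ------------------------------------------------------------------
  set nn : ℕ := (2*p).toNat with hnndef
  have hnn : ((nn : ℕ) : ℤ) = 2*p := Int.toNat_of_nonneg (by omega)
  have horth : ∀ d : ℤ, (∑ k ∈ Finset.range nn, ζ ^ (d * (k : ℤ)))
      = if (2*p) ∣ d then (((2*p : ℤ)) : ℂ) else 0 := by
    intro d
    have hform : ∀ k : ℕ, ζ ^ (d * (k : ℤ)) = (ζ ^ d) ^ k := by
      intro k
      rw [zpow_mul, zpow_natCast]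
    simp only [hform]
    by_cases hd : (2*p) ∣ d
    · obtain ⟨t, rfl⟩ := hd
      have h1 : ζ ^ (2*p*t) = 1 := by
        rw [show 2*p*t = (2*p)*t from rfl, zpow_mul, h2p, one_zpow]
      rw [if_pos ⟨t, rfl⟩]
      simp only [h1, one_pow, Finset.sum_const, Finset.card_range, nsmul_eq_mul, mul_one]
      exact_mod_cast congrArg (fun z : ℤ => (z : ℂ)) hnn
    · rw [if_neg hd]
      have hne1 : ζ ^ d ≠ 1 := by
        intro h1
        apply hd
        rw [hzpow, Complex.exp_eq_one_iff] at h1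
        obtain ⟨t, ht⟩ := h1
        have hπI : (Real.pi : ℂ) * Complex.I ≠ 0 :=
          mul_ne_zero (by exact_mod_cast Real.pi_ne_zero) Complex.I_ne_zero
        have hd2 : (d : ℂ) = 2*(p:ℂ)*t := by
          apply mul_right_cancel₀ hπI
          field_simp at ht
          linear_combination ((Real.pi : ℂ) * Complex.I) * ht
        exact ⟨t, by exact_mod_cast hd2⟩
      rw [geom_sum_eq hne1]
      have hpow : (ζ ^ d) ^ nn = 1 := by
        rw [← zpow_natCast (ζ ^ d) nn, ← zpow_mul, hnn, mul_comm d, zpow_mul, h2p, one_zpow]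
      rw [hpow]
      simp
  ------------------------------------------------------------------
  -- the coefficient identity
  ------------------------------------------------------------------
  have key : ∀ a : ℤ,
      (if (2*p) ∣ (p*(1+m) + c*(q'+1)) - a then (2*p : ℤ) else 0)
      + (if (2*p) ∣ (p*(1+m) - c*(q'+1)) - a then (2*p : ℤ) else 0)
      - (if (2*p) ∣ (p*(1+m) + c*(q'-1)) - a then (2*p : ℤ) else 0)
      - (if (2*p) ∣ (p*(1+m) - c*(q'-1)) - a then (2*p : ℤ) else 0)
      - (if (2*p) ∣ (p*c + (q+1)) - a then (2*p : ℤ) else 0)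
      - (if (2*p) ∣ (p*c - (q+1)) - a then (2*p : ℤ) else 0)
      + (if (2*p) ∣ (p*c + (q-1)) - a then (2*p : ℤ) else 0)
      + (if (2*p) ∣ (p*c - (q-1)) - a then (2*p : ℤ) else 0) = 0 := by
    intro a
    have hmul : ∀ (dd : ℤ) (k : ℕ), ζ ^ ((dd - a) * (k : ℤ))
        = ζ ^ (dd * (k : ℤ)) * ζ ^ ((-a) * (k : ℤ)) := by
      intro dd k
      rw [← zpow_add₀ hζ]
      congr 1
      ring
    have hsum : ∑ k ∈ Finset.range nn,
        (ζ ^ (((p*(1+m) + c*(q'+1)) - a) * (k : ℤ))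
        + ζ ^ (((p*(1+m) - c*(q'+1)) - a) * (k : ℤ))
        - ζ ^ (((p*(1+m) + c*(q'-1)) - a) * (k : ℤ))
        - ζ ^ (((p*(1+m) - c*(q'-1)) - a) * (k : ℤ))
        - ζ ^ (((p*c + (q+1)) - a) * (k : ℤ))
        - ζ ^ (((p*c - (q+1)) - a) * (k : ℤ))
        + ζ ^ (((p*c + (q-1)) - a) * (k : ℤ))
        + ζ ^ (((p*c - (q-1)) - a) * (k : ℤ))) = 0 := by
      apply Finset.sum_eq_zero
      intro k _
      simp only [hmul]
      linear_combination ζ ^ ((-a) * (k : ℤ)) * claim (k : ℤ)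
    simp only [Finset.sum_add_distrib, Finset.sum_sub_distrib] at hsum
    rw [horth, horth, horth, horth, horth, horth, horth, horth] at hsum
    have hIte : ∀ (PP : Prop) (_ : Decidable PP),
        (if PP then ((2*p : ℤ) : ℂ) else (0:ℂ)) = (((if PP then (2*p : ℤ) else 0) : ℤ) : ℂ) := by
      intro PP inst
      split <;> simp
    simp only [hIte] at hsum
    exact_mod_cast hsum
  ------------------------------------------------------------------
  -- extract the two matchings
  ------------------------------------------------------------------
  have keyA := key (p*c + (q+1))
  rw [show (p*c + (q+1)) - (p*c + (q+1)) = (0:ℤ) by ring,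
      show (p*c - (q+1)) - (p*c + (q+1)) = -(2*(q+1)) by ring,
      show (p*c + (q-1)) - (p*c + (q+1)) = (-2 : ℤ) by ring,
      show (p*c - (q-1)) - (p*c + (q+1)) = -(2*q) by ring] at keyA
  have hnot2 : ¬ (2*p) ∣ (-2 : ℤ) := by
    intro hd
    have := Int.le_of_dvd (by norm_num) (dvd_neg.mp hd)
    omega
  have hnot2q : ¬ (2*p) ∣ -(2*q) := by
    intro hd
    have := Int.le_of_dvd (by omega) (dvd_neg.mp hd)
    omega
  rw [if_pos (dvd_zero _), if_neg hnot2, if_neg hnot2q] at keyA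
  have hA : (2*p) ∣ (p*(1+m) + c*(q'+1)) - (p*c + (q+1))
      ∨ (2*p) ∣ (p*(1+m) - c*(q'+1)) - (p*c + (q+1)) := by
    by_contra hno
    push_neg at hno
    rw [if_neg hno.1, if_neg hno.2] at keyA
    split_ifs at keyA <;> omega
  have keyB := key (p*c + (q-1))
  rw [show (p*c + (q-1)) - (p*c + (q-1)) = (0:ℤ) by ring,
      show (p*c - (q-1)) - (p*c + (q-1)) = -(2*(q-1)) by ring,
      show (p*c + (q+1)) - (p*c + (q-1)) = (2 : ℤ) by ring,
      show (p*c - (q+1)) - (p*c + (q-1)) = -(2*q) by ring] at keyB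
  have hnot2' : ¬ (2*p) ∣ (2 : ℤ) := by
    intro hd
    have := Int.le_of_dvd (by norm_num) hd
    omega
  rw [if_pos (dvd_zero _), if_neg hnot2', if_neg hnot2q] at keyB
  have hB : (2*p) ∣ (p*(1+m) + c*(q'-1)) - (p*c + (q-1))
      ∨ (2*p) ∣ (p*(1+m) - c*(q'-1)) - (p*c + (q-1)) := by
    by_contra hno
    push_neg at hno
    rw [if_neg hno.1, if_neg hno.2] at keyB
    split_ifs at keyB <;> omega
  ------------------------------------------------------------------
  -- final arithmetic
  ------------------------------------------------------------------
  rcases hA with hA | hA <;> rcases hB with hB | hB <;>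
    [skip; skip; skip; skip]
  · -- c ≡ 1 (mod p)
    obtain ⟨t₁, e₁⟩ := hA
    obtain ⟨t₂, e₂⟩ := hB
    have hc1 : c - 1 = p * (t₁ - t₂) :=
      mul_left_cancel₀ (by norm_num : (2:ℤ) ≠ 0) (by linear_combination e₁ - e₂)
    left
    rw [Int.modEq_iff_dvd]
    exact ⟨-((t₁ - t₂)*(c+1)*q' + m), by linear_combination -hm - (c+1)*q'*hc1⟩
  · -- c q' ≡ 1 (mod p)
    obtain ⟨t₁, e₁⟩ := hA
    obtain ⟨t₂, e₂⟩ := hB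
    have hcq : c*q' - 1 = p * (t₁ - t₂) :=
      mul_left_cancel₀ (by norm_num : (2:ℤ) ≠ 0) (by linear_combination e₁ - e₂)
    right
    rw [Int.modEq_iff_dvd]
    exact ⟨-((t₁ - t₂)*(c*q'+1) + m*q'), by linear_combination -q'*hm - (c*q'+1)*hcq⟩
  · -- c q' ≡ -1 (mod p)
    obtain ⟨t₁, e₁⟩ := hA
    obtain ⟨t₂, e₂⟩ := hB
    have hcq : c*q' + 1 = p * (t₂ - t₁) :=
      mul_left_cancel₀ (by norm_num : (2:ℤ) ≠ 0) (by linear_combination e₂ - e₁)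
    right
    rw [Int.modEq_iff_dvd]
    exact ⟨-((c*q'-1)*(t₂ - t₁) + m*q'), by linear_combination -q'*hm - (c*q'-1)*hcq⟩
  · -- c ≡ -1 (mod p)
    obtain ⟨t₁, e₁⟩ := hA
    obtain ⟨t₂, e₂⟩ := hB
    have hc1 : c + 1 = p * (t₂ - t₁) :=
      mul_left_cancel₀ (by norm_num : (2:ℤ) ≠ 0) (by linear_combination e₂ - e₁)
    left
    rw [Int.modEq_iff_dvd]
    exact ⟨-((c-1)*(t₂ - t₁)*q' + m), by linear_combination -hm - (c-1)*q'*hc1⟩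
end

section
/- There exists a group homomorphism ρ from SL(2,ℤ) (the special linear group of 2×2 integer matrices of determinant 1) to GL(2,ℂ) such that ρ sends [[1,1],[0,1]] to [[1,−2i],[0,1]] and sends [[0,−1],[1,0]] to [[0,2i],[i/2,0]] (which equals −i·[[0,−2],[−1/2,0]]), and such that for every A ∈ SL(2,ℤ), if ρ(A) is a scalar matrix (i.e. ρ(A) = c·Id for some c ∈ ℂ) then A = Id or A = −Id. (This is the content of the paper's theorem that for g = 1 and r = 2 the mapping class group representation on 𝕍(S¹×S¹) with ω = 0 — given in the basis [T_{xP₀}], [T_{P₀}] by T ↦ [[1,−2i],[0,1]] and S ↦ [[0,−2],[−1/2,0]] — is faithful modulo the center.) -/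
open Matrix

set_option linter.unnecessarySeqFocus false

noncomputable def Pu : GL (Fin 2) ℂ :=
  ⟨!![-2*Complex.I, 0; 0, 1], !![Complex.I/2, 0; 0, 1],
   by ext i j; fin_cases i <;> fin_cases j <;> simp [Matrix.mul_apply, Fin.sum_univ_two] <;>
     ring_nf <;> simp [Complex.I_sq],
   by ext i j; fin_cases i <;> fin_cases j <;> simp [Matrix.mul_apply, Fin.sum_univ_two] <;>
     ring_nf <;> simp [Complex.I_sq]⟩

noncomputable def myρ : Matrix.SpecialLinearGroup (Fin 2) ℤ →* GL (Fin 2) ℂ :=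
  (MulAut.conj Pu).toMonoidHom.comp
    (Matrix.SpecialLinearGroup.toGL.comp
      (Matrix.SpecialLinearGroup.map (Int.castRingHom ℂ)))

lemma myρ_apply (A : Matrix.SpecialLinearGroup (Fin 2) ℤ) :
    ((myρ A : GL (Fin 2) ℂ) : Matrix (Fin 2) (Fin 2) ℂ)
      = !![-2*Complex.I, 0; 0, 1] * ((A : Matrix (Fin 2) (Fin 2) ℤ)).map (Int.cast)
        * !![Complex.I/2, 0; 0, 1] := rfl

/-- there is a group homomorphism `ρ : SL(2,ℤ) → GL(2,ℂ)` sending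
`T = [[1,1],[0,1]]` to `[[1,−2i],[0,1]]` and `S = [[0,−1],[1,0]]` to
`[[0,2i],[i/2,0]]`, such that `ρ(A)` scalar implies `A = ±Id`. -/
theorem statement15 :
    ∃ ρ : Matrix.SpecialLinearGroup (Fin 2) ℤ →* GL (Fin 2) ℂ,
      ((ρ ⟨!![1, 1; 0, 1], by norm_num [Matrix.det_fin_two_of]⟩ :
          GL (Fin 2) ℂ) : Matrix (Fin 2) (Fin 2) ℂ)
          = !![1, -2 * Complex.I; 0, 1] ∧
      ((ρ ⟨!![0, -1; 1, 0], by norm_num [Matrix.det_fin_two_of]⟩ :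
          GL (Fin 2) ℂ) : Matrix (Fin 2) (Fin 2) ℂ)
          = !![0, 2 * Complex.I; Complex.I / 2, 0] ∧
      ∀ A : Matrix.SpecialLinearGroup (Fin 2) ℤ,
        (∃ cc : ℂ, ((ρ A : GL (Fin 2) ℂ) : Matrix (Fin 2) (Fin 2) ℂ)
            = cc • (1 : Matrix (Fin 2) (Fin 2) ℂ)) →
        (A : Matrix (Fin 2) (Fin 2) ℤ) = 1 ∨ (A : Matrix (Fin 2) (Fin 2) ℤ) = -1 := by
  refine ⟨myρ, ?_, ?_, ?_⟩
  · refine (myρ_apply _).trans ?_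
    ext i j
    fin_cases i <;> fin_cases j <;>
      simp [Matrix.mul_apply, Fin.sum_univ_two, Matrix.map_apply, Matrix.vecMul,
        dotProduct] <;> ring_nf <;> simp [Complex.I_sq]
  · refine (myρ_apply _).trans ?_
    ext i j
    fin_cases i <;> fin_cases j <;>
      simp [Matrix.mul_apply, Fin.sum_univ_two, Matrix.map_apply, Matrix.vecMul,
        dotProduct] <;> ring_nf <;> simp [Complex.I_sq]
  · rintro A ⟨cc, hcc⟩
    rw [myρ_apply] at hcc
    have h01 := congrFun (congrFun hcc 0) 1
    have h10 := congrFun (congrFun hcc 1) 0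
    have h00 := congrFun (congrFun hcc 0) 0
    have h11 := congrFun (congrFun hcc 1) 1
    simp [Matrix.mul_apply, Fin.sum_univ_two, Matrix.map_apply, Matrix.one_apply,
      Matrix.vecMul, dotProduct] at h01 h10 h00 h11
    have hdiagC : ((A : Matrix (Fin 2) (Fin 2) ℤ) 0 0 : ℂ)
        = ((A : Matrix (Fin 2) (Fin 2) ℤ) 1 1 : ℂ) := by
      rw [← h11] at h00
      linear_combination h00 + ((A : Matrix (Fin 2) (Fin 2) ℤ) 0 0 : ℂ) * Complex.I_sq
    have hAd : (A : Matrix (Fin 2) (Fin 2) ℤ) 0 0 = (A : Matrix (Fin 2) (Fin 2) ℤ) 1 1 := by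
      exact_mod_cast hdiagC
    have hdet : (A : Matrix (Fin 2) (Fin 2) ℤ).det = 1 := A.2
    rw [Matrix.det_fin_two, h01, h10, ← hAd] at hdet
    have hsq : (A : Matrix (Fin 2) (Fin 2) ℤ) 0 0 = 1 ∨
        (A : Matrix (Fin 2) (Fin 2) ℤ) 0 0 = -1 := by
      have : (A : Matrix (Fin 2) (Fin 2) ℤ) 0 0 * (A : Matrix (Fin 2) (Fin 2) ℤ) 0 0 = 1 := by
        linarith [hdet]
      exact Int.isUnit_iff.mp (IsUnit.of_mul_eq_one _ this)
    rcases hsq with h | h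
    · left
      ext i j
      fin_cases i <;> fin_cases j <;> simp [h01, h10, h, ← hAd, Matrix.one_apply]
    · right
      ext i j
      fin_cases i <;> fin_cases j <;> simp [h01, h10, h, ← hAd]
end
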